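/- arXiv:2311.04347 — 4 statements merged into one kernel-verified Lean document; each statement's English description precedes it below -/
import Mathlib

section
/- For every α > 0, ∫_{-∞}^{∞} |Γ(α+it)|² dt = π Γ(2α) / 2^{2α-1}. -/
open Real

open MeasureTheory Filter Complex
open scoped FourierTransform Topology

noncomputable section GammaPlancherelAux

/-- logistic map -/
def sig (v : ℝ) : ℝ := Real.exp v / (1 + Real.exp v)

/-- its derivative -/
def sigd (v : ℝ) : ℝ := Real.exp v / (1 + Real.exp v) ^ 2

lemma one_add_exp_pos (v : ℝ) : 0 < 1 + Real.exp v := by positivity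

lemma hasDerivAt_sig (v : ℝ) : HasDerivAt sig (sigd v) v := by
  have h := (Real.hasDerivAt_exp v).div ((hasDerivAt_const v (1:ℝ)).add (Real.hasDerivAt_exp v))
    (one_add_exp_pos v).ne'
  refine h.congr_deriv ?_
  simp only [sigd, Pi.add_apply]
  field_simp
  ring

lemma sig_eq (v : ℝ) : sig v = Real.exp (v - Real.log (1 + Real.exp v)) := by
  rw [Real.exp_sub, Real.exp_log (one_add_exp_pos v)]; rfl

lemma one_sub_sig (v : ℝ) : 1 - sig v = Real.exp (-Real.log (1 + Real.exp v)) := by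
  rw [Real.exp_neg, Real.exp_log (one_add_exp_pos v)]
  rw [sig]
  field_simp [sig]
  ring

lemma sigd_eq (v : ℝ) : sigd v = Real.exp (v - 2 * Real.log (1 + Real.exp v)) := by
  rw [show v - 2 * Real.log (1 + Real.exp v) = v - (Real.log (1 + Real.exp v) +
    Real.log (1 + Real.exp v)) by ring, Real.exp_sub, Real.exp_add,
    Real.exp_log (one_add_exp_pos v)]
  simp [sigd, sq]

lemma sig_mem (v : ℝ) : sig v ∈ Set.Ioo (0:ℝ) 1 := by
  constructor
  · have := Real.exp_pos v; have := one_add_exp_pos v; exact div_pos ‹0 < Real.exp v› ‹_›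
  · rw [sig, div_lt_one (one_add_exp_pos v)]; linarith [Real.exp_pos v]

lemma sig_strictMono : StrictMono sig := by
  intro a b hab
  have ha := Real.exp_pos a; have hb := Real.exp_pos b
  have h := Real.exp_lt_exp.2 hab
  rw [sig, sig, div_lt_div_iff₀ (one_add_exp_pos a) (one_add_exp_pos b)]
  nlinarith

lemma sig_range : sig '' Set.univ = Set.Ioo (0:ℝ) 1 := by
  rw [Set.image_univ]
  apply Set.Subset.antisymm
  · rintro x ⟨v, rfl⟩; exact sig_mem v
  · rintro x ⟨hx0, hx1⟩
    refine ⟨Real.log (x / (1 - x)), ?_⟩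
    have h1x : 0 < 1 - x := by linarith
    rw [sig, Real.exp_log (div_pos hx0 h1x)]
    field_simp
    ring

end GammaPlancherelAux

section Gamma2

noncomputable def hfun (α v : ℝ) : ℝ := Real.exp (α * v - 2 * α * Real.log (1 + Real.exp v))

lemma continuous_hfun (α : ℝ) : Continuous (hfun α) := by
  unfold hfun
  fun_prop (disch := intro v; positivity)

lemma hfun_zero (α : ℝ) : hfun α 0 = (2:ℝ) ^ (-(2*α)) := by
  rw [hfun, Real.rpow_def_of_pos (by norm_num : (0:ℝ) < 2)]
  norm_num
  ring

/-- real exp to rpow -/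
lemma exp_rpow' (a y : ℝ) : (Real.exp a) ^ y = Real.exp (a * y) := by
  rw [Real.rpow_def_of_pos (Real.exp_pos a), Real.log_exp]

/-- the real Jacobian identity -/
lemma real_jacobian (α v : ℝ) :
    |sigd v| * ((sig v) ^ (α - 1) * (1 - sig v) ^ (α - 1)) = hfun α v := by
  rw [abs_of_pos (by rw [sigd_eq]; exact Real.exp_pos _), sigd_eq, one_sub_sig, sig_eq,
    exp_rpow', exp_rpow', ← Real.exp_add, ← Real.exp_add, hfun, Real.exp_eq_exp]
  ring

lemma G_integrableOn (α : ℝ) (hα : 0 < α) :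
    IntegrableOn (fun x : ℝ => x ^ (α - 1) * (1 - x) ^ (α - 1)) (Set.Ioo (0:ℝ) 1) := by
  have h := (Complex.betaIntegral_convergent (u := (α:ℂ)) (v := (α:ℂ))
    (by simpa using hα) (by simpa using hα))
  have h2 : IntegrableOn (fun x : ℝ => (x:ℂ) ^ ((α:ℂ) - 1) * (1 - (x:ℂ)) ^ ((α:ℂ) - 1))
      (Set.Ioo (0:ℝ) 1) := by
    refine ((intervalIntegrable_iff_integrableOn_Ioc_of_le (by norm_num)).1 h).mono_set
      Set.Ioo_subset_Ioc_self
  refine MeasureTheory.IntegrableOn.congr_fun h2.norm (fun x hx => ?_) measurableSet_Ioo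
  obtain ⟨hx0, hx1⟩ := hx
  simp only [norm_mul]
  rw [Complex.norm_cpow_eq_rpow_re_of_pos hx0, show (1 - (x:ℂ)) = ((1 - x : ℝ) : ℂ) by push_cast; ring,
    Complex.norm_cpow_eq_rpow_re_of_pos (by linarith)]
  simp

lemma hfun_integrable (α : ℝ) (hα : 0 < α) : Integrable (hfun α) := by
  have key := (integrableOn_image_iff_integrableOn_abs_deriv_smul MeasurableSet.univ
    (fun x _ => (hasDerivAt_sig x).hasDerivWithinAt) (sig_strictMono.injective.injOn)
    (fun x : ℝ => x ^ (α - 1) * (1 - x) ^ (α - 1)))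
  rw [sig_range] at key
  have h2 := key.1 (G_integrableOn α hα)
  rw [← integrableOn_univ]
  refine h2.congr_fun (fun v _ => ?_) MeasurableSet.univ
  simpa [smul_eq_mul] using (real_jacobian α v)

end Gamma2

section FourierBeta

lemma cexp_ofReal_rpow (a : ℝ) (w : ℂ) :
    ((Real.exp a : ℝ) : ℂ) ^ w = Complex.exp (a * w) := by
  rw [Complex.cpow_def_of_ne_zero (by exact_mod_cast (Real.exp_pos a).ne'),
    ← Complex.ofReal_log (Real.exp_pos a).le, Real.log_exp]

lemma key_pointwise (α ξ v : ℝ) :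
    |sigd v| • (((sig v : ℂ)) ^ ((↑α - 2*π*ξ*Complex.I) - 1) *
        (1 - (sig v : ℂ)) ^ ((↑α + 2*π*ξ*Complex.I) - 1))
      = Complex.exp (↑(-2 * π * v * ξ) * Complex.I) • ((hfun α v : ℝ) : ℂ) := by
  have hℓ : (1 - (sig v : ℂ)) = ((1 - sig v : ℝ) : ℂ) := by push_cast; ring
  rw [hℓ, one_sub_sig, sig_eq, sigd_eq, hfun, abs_of_pos (Real.exp_pos _),
    cexp_ofReal_rpow, cexp_ofReal_rpow, Complex.real_smul, Complex.ofReal_exp,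
    Complex.ofReal_exp, smul_eq_mul, ← Complex.exp_add, ← Complex.exp_add, ← Complex.exp_add]
  congr 1
  push_cast
  ring

lemma fourier_H_eq (α : ℝ) (ξ : ℝ) :
    𝓕 (fun v : ℝ => ((hfun α v : ℝ) : ℂ)) ξ =
      Complex.betaIntegral (↑α - 2*π*ξ*Complex.I) (↑α + 2*π*ξ*Complex.I) := by
  rw [Real.fourier_real_eq_integral_exp_smul, Complex.betaIntegral,
    intervalIntegral.integral_of_le zero_le_one, MeasureTheory.integral_Ioc_eq_integral_Ioo, ← sig_range,
    integral_image_eq_integral_abs_deriv_smul MeasurableSet.univ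
      (fun x _ => (hasDerivAt_sig x).hasDerivWithinAt) (sig_strictMono.injective.injOn),
    Measure.restrict_univ]
  exact (MeasureTheory.integral_congr_ae (Filter.Eventually.of_forall
    (fun v => (key_pointwise α ξ v)))).symm

end FourierBeta

section GammaId

lemma gamma_identity (α : ℝ) (hα : 0 < α) (ξ : ℝ) :
    𝓕 (fun v : ℝ => ((hfun α v : ℝ) : ℂ)) ξ =
      (((‖Complex.Gamma (↑α + 2*π*ξ*Complex.I)‖)^2 / Real.Gamma (2*α) : ℝ) : ℂ) := by
  have h1 : (0:ℝ) < ((↑α - 2*π*ξ*Complex.I : ℂ)).re := by simp [hα]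
  have h2 : (0:ℝ) < ((↑α + 2*π*ξ*Complex.I : ℂ)).re := by simp [hα]
  have hbeta := Complex.Gamma_mul_Gamma_eq_betaIntegral h1 h2
  have hsum : (↑α - 2*π*ξ*Complex.I) + (↑α + 2*π*ξ*Complex.I) = ((2*α : ℝ) : ℂ) := by
    push_cast; ring
  rw [hsum, Complex.Gamma_ofReal] at hbeta
  have hconj : Complex.Gamma (↑α - 2*π*ξ*Complex.I)
      = (starRingEnd ℂ) (Complex.Gamma (↑α + 2*π*ξ*Complex.I)) := by
    rw [← Complex.Gamma_conj]; congr 1; simp [Complex.ext_iff]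
  rw [hconj] at hbeta
  have habs : (starRingEnd ℂ) (Complex.Gamma (↑α + 2*π*ξ*Complex.I)) *
        Complex.Gamma (↑α + 2*π*ξ*Complex.I)
      = (((‖Complex.Gamma (↑α + 2*π*ξ*Complex.I)‖)^2 : ℝ) : ℂ) := by
    rw [mul_comm, Complex.mul_conj, Complex.normSq_eq_norm_sq]
  rw [habs] at hbeta
  have hΓpos := Real.Gamma_pos_of_pos (by linarith : (0:ℝ) < 2*α)
  rw [fourier_H_eq, Complex.ofReal_div, eq_div_iff (by exact_mod_cast hΓpos.ne'), mul_comm]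
  exact hbeta.symm

end GammaId

lemma fourier_eq_vf (f : ℝ → ℂ) :
    𝓕 f = VectorFourier.fourierIntegral Real.fourierChar volume (innerₗ ℝ) f := rfl

section Core
open scoped RealInnerProductSpace
open Module

lemma tendsto_gauss_fourier (f : ℝ → ℂ) (hf : Integrable f) (hcont : ContinuousAt f 0) :
    Tendsto (fun c : ℝ => ∫ ξ : ℝ, Complex.exp (-(c:ℂ)⁻¹ * (‖ξ‖:ℂ)^2) • 𝓕 f ξ)
      atTop (𝓝 (f 0)) := by
  have B : Tendsto (fun c : ℝ =>
      ∫ w : ℝ, ((π * c : ℂ) ^ (Module.finrank ℝ ℝ / 2 : ℂ) *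
        Complex.exp (-π^2 * c * ‖(0:ℝ) - w‖^2)) • f w) atTop (𝓝 (f 0)) :=
    Real.tendsto_integral_gaussian_smul' hf hcont
  apply B.congr'
  filter_upwards [Ioi_mem_atTop 0] with c (hc : 0 < c)
  have hb : 0 < ((c:ℂ)⁻¹).re := by simpa using inv_pos.2 hc
  have J : Integrable (fun w : ℝ =>
      Complex.exp (-(c:ℂ)⁻¹ * ‖w‖^2 + 2*π*Complex.I * ⟪(0:ℝ), w⟫)) :=
    GaussianFourier.integrable_cexp_neg_mul_sq_norm_add hb _ _
  have flip := VectorFourier.integral_fourierIntegral_smul_eq_flip (L := innerₗ ℝ)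
    Real.continuous_fourierChar continuous_inner J hf
  have hflipL : (innerₗ ℝ).flip = innerₗ ℝ := by
    apply LinearMap.ext; intro x; apply LinearMap.ext; intro y
    simpa using real_inner_comm y x
  rw [hflipL] at flip
  refine Eq.trans ?_ (Eq.trans flip ?_)
  · refine integral_congr_ae (Eventually.of_forall fun w => ?_)
    dsimp only
    congr 1
    have h1 : 𝓕 (fun v : ℝ => Complex.exp (-(c:ℂ)⁻¹*‖v‖^2 + 2*π*Complex.I*⟪(0:ℝ),v⟫)) w
        = (π * c : ℂ) ^ (finrank ℝ ℝ / 2 : ℂ) * Complex.exp (-π^2 * c * ‖(0:ℝ)-w‖^2) := by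
      rw [fourier_gaussian_innerProductSpace' hb 0 w]
      have hc' : (c:ℂ) ≠ 0 := Complex.ofReal_ne_zero.2 hc.ne'
      congr 1
      · congr 1
        field_simp
      · congr 1
        field_simp
    rw [fourier_eq_vf] at h1
    exact h1.symm
  · refine integral_congr_ae (Eventually.of_forall fun ξ => ?_)
    dsimp only
    rw [← fourier_eq_vf]
    congr 1
    simp

/-- the target profile function -/
noncomputable def phi (α ξ : ℝ) : ℝ :=
  ‖Complex.Gamma (↑α + 2*π*ξ*Complex.I)‖^2 / Real.Gamma (2*α)

lemma phi_nonneg (α : ℝ) (hα : 0 < α) (ξ : ℝ) : 0 ≤ phi α ξ := by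
  have h := Real.Gamma_pos_of_pos (by linarith : (0:ℝ) < 2*α)
  exact div_nonneg (by positivity) h.le

lemma fourier_H_eq_phi (α : ℝ) (hα : 0 < α) (ξ : ℝ) :
    𝓕 (fun v : ℝ => ((hfun α v : ℝ) : ℂ)) ξ = ((phi α ξ : ℝ) : ℂ) :=
  gamma_identity α hα ξ

lemma H_integrable (α : ℝ) (hα : 0 < α) :
    Integrable (fun v : ℝ => ((hfun α v : ℝ) : ℂ)) :=
  (hfun_integrable α hα).ofReal

lemma phi_continuous (α : ℝ) (hα : 0 < α) : Continuous (phi α) := by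
  have hF : Continuous (𝓕 (fun v : ℝ => ((hfun α v : ℝ) : ℂ))) := by
    exact VectorFourier.fourierIntegral_continuous Real.continuous_fourierChar
      continuous_inner (H_integrable α hα)
  have : Continuous (fun ξ => (𝓕 (fun v : ℝ => ((hfun α v : ℝ) : ℂ)) ξ).re) :=
    Complex.continuous_re.comp hF
  refine this.congr fun ξ => ?_
  rw [fourier_H_eq_phi α hα ξ, Complex.ofReal_re]

lemma phi_bounded (α : ℝ) (hα : 0 < α) (ξ : ℝ) :
    ‖phi α ξ‖ ≤ ∫ v : ℝ, ‖((hfun α v : ℝ) : ℂ)‖ := by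
  have h := VectorFourier.norm_fourierIntegral_le_integral_norm Real.fourierChar volume
    (innerₗ ℝ) (fun v : ℝ => ((hfun α v : ℝ) : ℂ)) ξ
  rw [← fourier_eq_vf] at h
  rwa [fourier_H_eq_phi α hα ξ, Complex.norm_real] at h

end Core

section Final

lemma integral_ofReal'' (f : ℝ → ℝ) : ∫ x : ℝ, ((f x : ℝ) : ℂ) = ((∫ x, f x : ℝ) : ℂ) :=
  integral_ofReal

lemma integral_phi (α : ℝ) (hα : 0 < α) : ∫ ξ : ℝ, phi α ξ = (2:ℝ) ^ (-(2*α)) := by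
  set H : ℝ → ℂ := fun v => ((hfun α v : ℝ) : ℂ) with hH
  have hHint : Integrable H := H_integrable α hα
  have hHcont : ContinuousAt H 0 :=
    (Complex.continuous_ofReal.comp (continuous_hfun α)).continuousAt
  have T1 := tendsto_gauss_fourier H hHint hHcont
  have hrep : ∀ c : ℝ, (∫ ξ : ℝ, Complex.exp (-(c:ℂ)⁻¹ * (‖ξ‖:ℂ)^2) • 𝓕 H ξ)
      = ((∫ ξ : ℝ, phi α ξ * Real.exp (-c⁻¹ * ξ^2) : ℝ) : ℂ) := by
    intro c
    rw [← integral_ofReal'' (fun ξ => phi α ξ * Real.exp (-c⁻¹ * ξ^2))]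
    refine integral_congr_ae (Eventually.of_forall fun ξ => ?_)
    dsimp only
    rw [show H = fun v => ((hfun α v : ℝ) : ℂ) from rfl, fourier_H_eq_phi α hα ξ, smul_eq_mul,
      show (-(c:ℂ)⁻¹ * (‖ξ‖:ℂ)^2) = ((-c⁻¹ * ξ^2 : ℝ) : ℂ) by
        rw [Real.norm_eq_abs, show ((|ξ|:ℝ):ℂ)^2 = ((|ξ|^2 : ℝ):ℂ) by push_cast; ring, _root_.sq_abs]
        push_cast; ring,
      ← Complex.ofReal_exp, ← Complex.ofReal_mul]
    norm_cast
    ring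
  have hT2 : Tendsto (fun c : ℝ => ∫ ξ : ℝ, phi α ξ * Real.exp (-c⁻¹ * ξ^2))
      atTop (𝓝 (hfun α 0)) := by
    have h2 : Tendsto (fun c : ℝ =>
        (∫ ξ : ℝ, Complex.exp (-(c:ℂ)⁻¹ * (‖ξ‖:ℂ)^2) • 𝓕 H ξ).re) atTop (𝓝 ((H 0).re)) :=
      (Complex.continuous_re.tendsto _).comp T1
    have h3 := h2.congr (fun c => by rw [hrep c, Complex.ofReal_re])
    simpa [hH] using h3
  have hgint : ∀ c : ℝ, 0 < c → Integrable (fun ξ : ℝ => phi α ξ * Real.exp (-c⁻¹ * ξ^2)) := by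
    intro c hc
    exact Integrable.bdd_mul (integrable_exp_neg_mul_sq (inv_pos.2 hc))
      ((phi_continuous α hα).aestronglyMeasurable)
      (Eventually.of_forall (phi_bounded α hα))
  set a : ℕ → ℝ := fun n => ∫ ξ : ℝ, phi α ξ * Real.exp (-((n:ℝ)+1)⁻¹ * ξ^2) with ha
  have hs : Tendsto (fun n : ℕ => (n:ℝ)+1) atTop atTop :=
    tendsto_atTop_add_const_right atTop 1 tendsto_natCast_atTop_atTop
  have haT : Tendsto a atTop (𝓝 (hfun α 0)) := hT2.comp hs
  have hptmono : ∀ (ξ : ℝ) {n m : ℕ}, n ≤ m →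
      phi α ξ * Real.exp (-((n:ℝ)+1)⁻¹ * ξ^2) ≤ phi α ξ * Real.exp (-((m:ℝ)+1)⁻¹ * ξ^2) := by
    intro ξ n m hnm
    refine mul_le_mul_of_nonneg_left (Real.exp_le_exp.2 ?_) (phi_nonneg α hα ξ)
    have h1 : ((m:ℝ)+1)⁻¹ ≤ ((n:ℝ)+1)⁻¹ := by
      apply inv_anti₀ (by positivity)
      have : (n:ℝ) ≤ (m:ℝ) := Nat.cast_le.2 hnm
      linarith
    nlinarith [sq_nonneg ξ]
  have hamono : Monotone a := by
    intro n m hnm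
    exact integral_mono (hgint _ (by positivity)) (hgint _ (by positivity))
      (fun ξ => hptmono ξ hnm)
  have habound : ∀ n, a n ≤ hfun α 0 := fun n => hamono.ge_of_tendsto haT n
  have hmeas : ∀ n : ℕ, AEMeasurable
      (fun ξ : ℝ => ENNReal.ofReal (phi α ξ * Real.exp (-((n:ℝ)+1)⁻¹ * ξ^2))) := by
    intro n
    exact (((phi_continuous α hα).mul (by continuity)).measurable).ennreal_ofReal.aemeasurable
  have hlim := lintegral_tendsto_of_tendsto_of_monotone (F := fun ξ => ENNReal.ofReal (phi α ξ)) hmeas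
    (Eventually.of_forall fun ξ => fun n m hnm => ENNReal.ofReal_le_ofReal (hptmono ξ hnm))
    (Eventually.of_forall fun ξ => by
      refine ENNReal.tendsto_ofReal ?_
      have hinv : Tendsto (fun n : ℕ => ((n:ℝ)+1)⁻¹) atTop (𝓝 0) := hs.inv_tendsto_atTop
      have : Tendsto (fun n : ℕ => Real.exp (-((n:ℝ)+1)⁻¹ * ξ^2)) atTop (𝓝 1) := by
        have := ((hinv.neg).mul_const (ξ^2)).rexp
        simpa using this
      simpa using (this.const_mul (phi α ξ)))
  have heq : ∀ n : ℕ, (∫⁻ ξ : ℝ, ENNReal.ofReal (phi α ξ * Real.exp (-((n:ℝ)+1)⁻¹ * ξ^2)))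
      = ENNReal.ofReal (a n) := by
    intro n
    exact (ofReal_integral_eq_lintegral_ofReal (hgint _ (by positivity))
      (Eventually.of_forall fun ξ =>
        mul_nonneg (phi_nonneg α hα ξ) (Real.exp_pos _).le)).symm
  have hfin : (∫⁻ ξ : ℝ, ENNReal.ofReal (phi α ξ)) ≤ ENNReal.ofReal (hfun α 0) := by
    refine le_of_tendsto hlim (Eventually.of_forall fun n => ?_)
    rw [heq n]
    exact ENNReal.ofReal_le_ofReal (habound n)
  have hφint : Integrable (phi α) := by
    refine ⟨(phi_continuous α hα).aestronglyMeasurable, ?_⟩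
    rw [hasFiniteIntegral_iff_ofReal (Eventually.of_forall (phi_nonneg α hα))]
    exact lt_of_le_of_lt hfin ENNReal.ofReal_lt_top
  have hFint : Integrable (𝓕 H) := by
    exact (hφint.ofReal).congr (Eventually.of_forall fun ξ =>
      (fourier_H_eq_phi α hα ξ).symm)
  have T3 := Real.tendsto_integral_cexp_sq_smul hFint
  have huniq : (∫ ξ : ℝ, 𝓕 H ξ) = H 0 := by
    refine tendsto_nhds_unique ?_ T1
    refine T3.congr fun c => ?_
    refine integral_congr_ae (Eventually.of_forall fun ξ => ?_)
    norm_cast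
  have hfinal : ((∫ ξ : ℝ, phi α ξ : ℝ) : ℂ) = ((hfun α 0 : ℝ) : ℂ) := by
    rw [← integral_ofReal'' (phi α), show ((hfun α 0 : ℝ) : ℂ) = H 0 from rfl, ← huniq]
    refine integral_congr_ae (Eventually.of_forall fun ξ => ?_)
    exact (fourier_H_eq_phi α hα ξ).symm
  have := Complex.ofReal_injective hfinal
  rw [this, hfun_zero]

end Final

/-- ∫_{-∞}^{∞} |Γ(α+it)|² dt = π Γ(2α)/2^{2α-1}. -/
theorem integral_sq_abs_Gamma_vertical (α : ℝ) (hα : 0 < α) :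
    ∫ t : ℝ, ‖Complex.Gamma (α + t * Complex.I)‖ ^ 2
      = π * Real.Gamma (2 * α) / (2 : ℝ) ^ (2 * α - 1) := by
  have hΓ := Real.Gamma_pos_of_pos (by linarith : (0:ℝ) < 2*α)
  have hπ : (0:ℝ) < 2*π := by positivity
  have hstep : ∀ t : ℝ, ‖Complex.Gamma (↑α + ↑t * Complex.I)‖ ^ 2
      = Real.Gamma (2*α) * phi α (t / (2*π)) := by
    intro t
    rw [phi, show (↑α + 2*(π:ℂ)*((t/(2*π) : ℝ):ℂ)*Complex.I : ℂ) = ↑α + ↑t * Complex.I by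
      have hne : (π:ℝ) ≠ 0 := Real.pi_ne_zero
      have hneC : (π:ℂ) ≠ 0 := Complex.ofReal_ne_zero.2 hne
      congr 1
      push_cast
      field_simp, mul_div_cancel₀ _ hΓ.ne']
  calc ∫ t : ℝ, ‖Complex.Gamma (↑α + ↑t * Complex.I)‖ ^ 2
      = ∫ t : ℝ, Real.Gamma (2*α) * phi α (t / (2*π)) :=
        integral_congr_ae (Eventually.of_forall fun t => hstep t)
    _ = Real.Gamma (2*α) * ∫ t : ℝ, phi α (t / (2*π)) := by
        rw [integral_const_mul]
    _ = Real.Gamma (2*α) * (|2*π| • ∫ ξ : ℝ, phi α ξ) := by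
        rw [MeasureTheory.Measure.integral_comp_div (phi α) (2*π)]
    _ = Real.Gamma (2*α) * (2*π * (2:ℝ) ^ (-(2*α))) := by
        rw [integral_phi α hα, abs_of_pos hπ, smul_eq_mul]
    _ = π * Real.Gamma (2 * α) / (2 : ℝ) ^ (2 * α - 1) := by
        rw [Real.rpow_sub two_pos, Real.rpow_one, Real.rpow_neg (by norm_num : (0:ℝ) ≤ 2)]
        have h2 : (0:ℝ) < (2:ℝ)^(2*α) := Real.rpow_pos_of_pos two_pos _
        field_simp
end

section
/- For every α > 1/2, the dispersion of the function γ ↦ Γ(α - 1/2 + iγ)/Γ(α), defined as D[f] = (∫ t²|f(t)|² dt)/(∫ |f(t)|² dt) (the mean x̄ being 0 by symmetry), equals α/2 - 1/4. -/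
open Real

open MeasureTheory Set Complex FourierTransform
open scoped ComplexConjugate



lemma cexp_integrand_eq (s : ℂ) (u : ℝ) :
    |Real.exp u| • (((Real.exp (-(Real.exp u)) : ℝ) : ℂ) * ((Real.exp u : ℝ) : ℂ) ^ (s - 1))
      = Complex.exp (s * u - Real.exp u) := by
  have hlog : Complex.log ((Real.exp u : ℝ) : ℂ) = (u : ℂ) := by
    rw [Complex.ofReal_exp, Complex.log_exp] <;> simp [Real.pi_pos, Real.pi_nonneg]
  rw [Complex.cpow_def_of_ne_zero (by exact_mod_cast (Real.exp_pos u).ne'), hlog]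
  rw [abs_of_pos (Real.exp_pos u), real_smul, ← mul_assoc, Complex.ofReal_exp,
    Complex.ofReal_exp, ← Complex.exp_add, ← Complex.exp_add]
  congr 1
  push_cast
  ring

lemma integral_cexp_gamma (s : ℂ) (hs : 0 < s.re) :
    ∫ u : ℝ, Complex.exp (s * u - Real.exp u) = Complex.Gamma s := by
  rw [Complex.Gamma_eq_integral hs, Complex.GammaIntegral]
  rw [show Set.Ioi (0:ℝ) = Real.exp '' Set.univ by rw [Set.image_univ, Real.range_exp],
    MeasureTheory.integral_image_eq_integral_abs_deriv_smul MeasurableSet.univ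
      (fun x _ => (Real.hasDerivAt_exp x).hasDerivWithinAt)
      (Real.exp_injective.injOn) (fun x => ((Real.exp (-x):ℝ) : ℂ) * (x:ℂ) ^ (s - 1)),
    MeasureTheory.setIntegral_univ]
  congr 1
  ext u
  exact (cexp_integrand_eq s u).symm

lemma integrable_cexp_gamma (s : ℂ) (hs : 0 < s.re) :
    MeasureTheory.Integrable (fun u : ℝ => Complex.exp (s * u - Real.exp u)) := by
  have h := (MeasureTheory.integrableOn_image_iff_integrableOn_abs_deriv_smul
    MeasurableSet.univ (fun x (_ : x ∈ Set.univ) => (Real.hasDerivAt_exp x).hasDerivWithinAt)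
    (Real.exp_injective.injOn) (fun x => ((Real.exp (-x):ℝ) : ℂ) * (x:ℂ) ^ (s - 1))).mp ?_
  · rw [← MeasureTheory.integrableOn_univ]
    exact h.congr_fun (fun u _ => cexp_integrand_eq s u) MeasurableSet.univ
  · rw [Set.image_univ, Real.range_exp]
    exact Complex.GammaIntegral_convergent hs



noncomputable def gfun (b : ℝ) : ℝ → ℂ := fun x => Complex.exp (b * x - Real.exp x)

lemma gfun_real (b : ℝ) (x : ℝ) : gfun b x = ((Real.exp (b * x - Real.exp x) : ℝ) : ℂ) := by
  rw [gfun, Complex.ofReal_exp]; push_cast; ring_nf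

lemma gfun_conj (b : ℝ) (x : ℝ) : conj (gfun b x) = gfun b x := by
  rw [gfun_real]; exact Complex.conj_ofReal _

lemma integrable_gfun {b : ℝ} (hb : 0 < b) : Integrable (gfun b) :=
  integrable_cexp_gamma b (by simpa using hb)

lemma continuous_gfun (b : ℝ) : Continuous (gfun b) := by
  unfold gfun; fun_prop

lemma contDiff_gfun (b : ℝ) : ContDiff ℝ 2 (gfun b) := by
  unfold gfun
  apply Complex.contDiff_exp.comp
  apply ContDiff.sub
  · exact (contDiff_const.mul Complex.ofRealCLM.contDiff)
  · exact Complex.ofRealCLM.contDiff.comp Real.contDiff_exp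

lemma exp_mul_gfun (b : ℝ) (x : ℝ) : (Real.exp x : ℂ) * gfun b x = gfun (b + 1) x := by
  rw [gfun, gfun, Complex.ofReal_exp, ← Complex.exp_add]
  congr 1; push_cast; ring

lemma hasDerivAt_gfun (b : ℝ) (x : ℝ) :
    HasDerivAt (gfun b) ((b : ℂ) * gfun b x - gfun (b + 1) x) x := by
  have h1 : HasDerivAt (fun x : ℝ => (b : ℂ) * x - Real.exp x) ((b : ℂ) - Real.exp x) x := by
    have hb : HasDerivAt (fun x : ℝ => b * x - Real.exp x) (b - Real.exp x) x := by
      have := ((hasDerivAt_id x).const_mul b).sub (Real.hasDerivAt_exp x)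
      simp only [mul_one] at this; exact this
    have h2 := hb.ofReal_comp
    convert h2 using 2 with y
    · push_cast; ring
    · push_cast; ring
  have := h1.cexp
  rw [show Complex.exp ((b:ℂ) * x - Real.exp x) = gfun b x from rfl] at this
  refine this.congr_deriv ?_
  rw [← exp_mul_gfun b x, gfun]; ring

lemma deriv_gfun (b : ℝ) : deriv (gfun b) = fun x => (b : ℂ) * gfun b x - gfun (b + 1) x := by
  ext x; exact (hasDerivAt_gfun b x).deriv

lemma integrable_deriv_gfun {b : ℝ} (hb : 0 < b) : Integrable (deriv (gfun b)) := by
  rw [deriv_gfun]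
  exact ((integrable_gfun hb).const_mul _).sub (integrable_gfun (by linarith))

lemma hasDerivAt_gfun' (b : ℝ) (x : ℝ) :
    HasDerivAt (fun x => (b : ℂ) * gfun b x - gfun (b + 1) x)
      ((b:ℂ) * ((b : ℂ) * gfun b x - gfun (b + 1) x)
        - ((b:ℂ)+1) * gfun (b+1) x + gfun (b + 2) x) x := by
  have h1 := ((hasDerivAt_gfun b x).const_mul (b:ℂ)).sub (hasDerivAt_gfun (b+1) x)
  refine h1.congr_deriv ?_
  push_cast
  rw [show b + 1 + 1 = b + 2 by ring]
  ring

lemma iteratedDeriv_two_gfun (b : ℝ) :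
    iteratedDeriv 2 (gfun b) = fun x =>
      (b:ℂ) * ((b : ℂ) * gfun b x - gfun (b + 1) x) - ((b:ℂ)+1) * gfun (b+1) x + gfun (b + 2) x := by
  rw [show (2:ℕ) = 1 + 1 from rfl, iteratedDeriv_succ, iteratedDeriv_one, deriv_gfun]
  ext x
  exact (hasDerivAt_gfun' b x).deriv

lemma integrable_iteratedDeriv_gfun {b : ℝ} (hb : 0 < b) (n : ℕ) (hn : n ≤ 2) :
    Integrable (iteratedDeriv n (gfun b)) := by
  interval_cases n
  · simpa [iteratedDeriv_zero] using integrable_gfun hb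
  · simpa [iteratedDeriv_one] using integrable_deriv_gfun hb
  · rw [iteratedDeriv_two_gfun]
    exact ((((integrable_gfun hb).const_mul _).sub
      (integrable_gfun (by linarith : (0:ℝ) < b+1))).const_mul _ |>.sub
      ((integrable_gfun (by linarith : (0:ℝ) < b+1)).const_mul _)).add
      (integrable_gfun (by linarith : (0:ℝ) < b+2))

lemma fourier_gfun {b : ℝ} (hb : 0 < b) (ξ : ℝ) :
    𝓕 (gfun b) ξ = Complex.Gamma (b - 2 * π * ξ * Complex.I) := by
  rw [Real.fourier_real_eq_integral_exp_smul]
  rw [← integral_cexp_gamma (b - 2 * π * ξ * Complex.I) (by simp [hb])]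
  congr 1
  ext v
  rw [smul_eq_mul, gfun, ← Complex.exp_add]
  congr 1
  push_cast
  ring

lemma fourier_iter2_gfun {b : ℝ} (hb : 0 < b) (ξ : ℝ) :
    𝓕 (iteratedDeriv 2 (gfun b)) ξ = (2 * π * Complex.I * ξ) ^ 2 • 𝓕 (gfun b) ξ := by
  rw [Real.fourier_iteratedDeriv (N := (2:ℕ∞)) ((contDiff_gfun b).of_le (by norm_num))
    (fun n hn => integrable_iteratedDeriv_gfun hb n (by exact_mod_cast hn)) (le_refl _)]

lemma continuous_fourier_gfun {b : ℝ} (hb : 0 < b) : Continuous (𝓕 (gfun b)) :=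
  VectorFourier.fourierIntegral_continuous Real.continuous_fourierChar
    (by exact continuous_inner) (integrable_gfun hb)

lemma integrable_fourier_gfun {b : ℝ} (hb : 0 < b) : Integrable (𝓕 (gfun b)) := by
  set C0 := ∫ x : ℝ, ‖gfun b x‖ with hC0
  set C2 := ∫ x : ℝ, ‖iteratedDeriv 2 (gfun b) x‖ with hC2
  have hbound : ∀ ξ : ℝ, ‖𝓕 (gfun b) ξ‖ ≤ (C0 + C2 / (4 * π ^ 2)) * (1 + ξ ^ 2)⁻¹ := by
    intro ξ
    have h1 : ‖𝓕 (gfun b) ξ‖ ≤ C0 :=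
      VectorFourier.norm_fourierIntegral_le_integral_norm _ _ _ _ _
    have h2 : (4 * π ^ 2) * (ξ ^ 2 * ‖𝓕 (gfun b) ξ‖) ≤ C2 := by
      have := VectorFourier.norm_fourierIntegral_le_integral_norm 𝐞 volume
        (innerₗ ℝ) (iteratedDeriv 2 (gfun b)) ξ
      rw [show (VectorFourier.fourierIntegral 𝐞 volume (innerₗ ℝ) (iteratedDeriv 2 (gfun b)) ξ)
          = 𝓕 (iteratedDeriv 2 (gfun b)) ξ from rfl, fourier_iter2_gfun hb ξ] at this
      rw [norm_smul] at this
      calc (4 * π ^ 2) * (ξ ^ 2 * ‖𝓕 (gfun b) ξ‖)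
          = ‖(2 * ↑π * Complex.I * ↑ξ) ^ 2‖ * ‖𝓕 (gfun b) ξ‖ := by
            rw [norm_pow]
            simp only [norm_mul, Complex.norm_real, Complex.norm_I, Real.norm_eq_abs,
              Complex.norm_ofNat]
            rw [_root_.abs_of_nonneg Real.pi_nonneg]
            rw [mul_pow, mul_pow, mul_pow, _root_.sq_abs ξ]
            ring
        _ ≤ C2 := this
    have hπ : (0:ℝ) < 4 * π ^ 2 := by positivity
    have h3 : ξ ^ 2 * ‖𝓕 (gfun b) ξ‖ ≤ C2 / (4 * π ^ 2) := by
      rw [le_div_iff₀ hπ]; linarith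
    have h4 : (1 + ξ ^ 2) * ‖𝓕 (gfun b) ξ‖ ≤ C0 + C2 / (4 * π ^ 2) := by
      rw [add_mul, one_mul]; exact add_le_add h1 h3
    have h5 : (0:ℝ) < 1 + ξ ^ 2 := by positivity
    rw [mul_comm, ← div_eq_inv_mul, le_div_iff₀' h5]
    linarith
  refine Integrable.mono' (g := fun ξ => (C0 + C2 / (4 * π ^ 2)) * (1 + ξ ^ 2)⁻¹)
    (integrable_inv_one_add_sq.const_mul _)
    ((continuous_fourier_gfun hb).aestronglyMeasurable) ?_
  filter_upwards with ξ using hbound ξ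


lemma integrable_conj' {f : ℝ → ℂ} (hf : Integrable f) :
    Integrable (fun x => conj (f x)) := by
  rw [← MeasureTheory.integrable_norm_iff ((Complex.continuous_conj.comp_aestronglyMeasurable hf.1))]
  simpa using hf.norm

lemma fourier_conj {u : ℝ → ℂ} (x : ℝ) :
    𝓕 (fun ξ => conj (u ξ)) x = conj (𝓕⁻ u x) := by
  rw [Real.fourier_real_eq_integral_exp_smul, Real.fourierInv_eq', ← integral_conj]
  congr 1
  ext v
  rw [smul_eq_mul, smul_eq_mul, map_mul, ← Complex.exp_conj]
  congr 2
  simp [Complex.conj_I, Complex.conj_ofReal, map_mul, map_ofNat]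
  ring

lemma parseval {f : ℝ → ℂ} (hc : Continuous f) (hf : Integrable f) (hFf : Integrable (𝓕 f)) :
    ∫ ξ : ℝ, 𝓕 f ξ * conj (𝓕 f ξ) = ∫ x : ℝ, f x * conj (f x) := by
  have hconj : Integrable (fun ξ => conj (𝓕 f ξ)) := integrable_conj' hFf
  have key := VectorFourier.integral_fourierIntegral_smul_eq_flip (e := 𝐞)
    (L := innerₗ ℝ) (μ := volume) (ν := volume) Real.continuous_fourierChar
    (by exact continuous_inner) hf hconj
  have lhs_eq : ∫ ξ : ℝ, 𝓕 f ξ * conj (𝓕 f ξ)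
      = ∫ ξ : ℝ, (VectorFourier.fourierIntegral 𝐞 volume (innerₗ ℝ) f ξ) • (conj (𝓕 f ξ)) := by
    rfl
  rw [lhs_eq, key]
  congr 1
  ext x
  have flip_eq : VectorFourier.fourierIntegral 𝐞 volume (innerₗ ℝ).flip
      (fun ξ => conj (𝓕 f ξ)) x = 𝓕 (fun ξ => conj (𝓕 f ξ)) x := by
    unfold VectorFourier.fourierIntegral
    congr 1
    ext v
    congr 2
    simp [LinearMap.flip_apply, real_inner_comm]
  rw [smul_eq_mul, flip_eq, fourier_conj, hf.fourierInv_fourier_eq hFf hc.continuousAt]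


lemma integral_rexp_gamma {c : ℝ} (hc : 0 < c) :
    ∫ u : ℝ, Real.exp (c * u - Real.exp u) = Real.Gamma c := by
  have h := integral_cexp_gamma (c : ℂ) (by simpa using hc)
  have heq : ∀ u : ℝ, Complex.exp ((c:ℂ) * u - Real.exp u)
      = ((Real.exp (c * u - Real.exp u) : ℝ) : ℂ) := by
    intro u
    rw [Complex.ofReal_exp]
    push_cast
    ring_nf
  simp_rw [heq] at h
  rw [show (∫ (u:ℝ), ((rexp (c * u - rexp u) : ℝ) : ℂ)) = ((∫ u : ℝ, rexp (c * u - rexp u) : ℝ) : ℂ)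
    from integral_ofReal, Complex.Gamma_ofReal] at h
  exact_mod_cast h

lemma integrable_rexp_gamma {c : ℝ} (hc : 0 < c) :
    Integrable (fun u : ℝ => Real.exp (c * u - Real.exp u)) := by
  have h := (integrable_cexp_gamma (c : ℂ) (by simpa using hc)).norm
  refine h.congr ?_
  filter_upwards with u
  rw [show ((c:ℂ) * (u:ℂ) - ((Real.exp u : ℝ) : ℂ)) = ((c * u - Real.exp u : ℝ) : ℂ) by push_cast; ring,
    ← Complex.ofReal_exp, Complex.norm_real, Real.norm_eq_abs, _root_.abs_of_pos (Real.exp_pos _)]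

lemma integral_sq_rexp {b : ℝ} (hb : 0 < b) :
    ∫ x : ℝ, Real.exp (2 * b * x - 2 * Real.exp x)
      = Real.exp (-(2 * b) * Real.log 2) * Real.Gamma (2 * b) := by
  have h : ∀ x : ℝ, Real.exp (2 * b * x - 2 * Real.exp x)
      = Real.exp (-(2 * b) * Real.log 2)
        * Real.exp (2 * b * (x + Real.log 2) - Real.exp (x + Real.log 2)) := by
    intro x
    rw [← Real.exp_add]
    congr 1
    rw [Real.exp_add, Real.exp_log two_pos]
    ring
  simp_rw [h]
  rw [integral_const_mul]
  congr 1
  rw [MeasureTheory.integral_add_right_eq_self (μ := volume)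
    (fun y => Real.exp (2 * b * y - Real.exp y)) (Real.log 2)]
  exact integral_rexp_gamma (by linarith)

noncomputable def Jfun (b : ℝ) : ℝ → ℝ :=
  fun t => ‖Complex.Gamma (b + t * Complex.I)‖ ^ 2

lemma fourier_gfun_J {b : ℝ} (hb : 0 < b) (ξ : ℝ) :
    Complex.normSq (𝓕 (gfun b) ξ) = Jfun b (-(2 * π) * ξ) := by
  rw [fourier_gfun hb, Jfun, Complex.normSq_eq_norm_sq]
  congr 3
  push_cast
  ring

lemma J_parseval {b : ℝ} (hb : 0 < b) :
    ∫ ξ : ℝ, Jfun b (-(2 * π) * ξ)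
      = Real.exp (-(2 * b) * Real.log 2) * Real.Gamma (2 * b) := by
  have hp := parseval (continuous_gfun b) (integrable_gfun hb) (integrable_fourier_gfun hb)
  have hL : ∀ ξ : ℝ, 𝓕 (gfun b) ξ * conj (𝓕 (gfun b) ξ)
      = ((Jfun b (-(2 * π) * ξ) : ℝ) : ℂ) := by
    intro ξ
    rw [Complex.mul_conj, fourier_gfun_J hb]
  have hR : ∀ x : ℝ, gfun b x * conj (gfun b x)
      = ((Real.exp (2 * b * x - 2 * Real.exp x) : ℝ) : ℂ) := by
    intro x
    rw [gfun_conj, gfun_real, ← Complex.ofReal_mul, ← Real.exp_add]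
    norm_cast
    ring_nf
  simp_rw [hL, hR] at hp
  rw [show (∫ (ξ:ℝ), ((Jfun b (-(2*π) * ξ) : ℝ) : ℂ)) = ((∫ ξ : ℝ, Jfun b (-(2*π) * ξ) : ℝ) : ℂ)
      from integral_ofReal,
    show (∫ (x:ℝ), ((Real.exp (2*b*x - 2*Real.exp x) : ℝ) : ℂ))
      = ((∫ x : ℝ, Real.exp (2*b*x - 2*Real.exp x) : ℝ) : ℂ) from integral_ofReal] at hp
  have := Complex.ofReal_injective hp
  rw [this, integral_sq_rexp hb]

lemma J_integrable_comp {b : ℝ} (hb : 0 < b) :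
    Integrable (fun ξ : ℝ => Jfun b (-(2 * π) * ξ)) := by
  have hFf := integrable_fourier_gfun hb
  have hcont : Continuous (fun ξ : ℝ => Complex.normSq (𝓕 (gfun b) ξ)) :=
    Complex.continuous_normSq.comp (continuous_fourier_gfun hb)
  have hbdd : ∀ ξ : ℝ, ‖Complex.normSq (𝓕 (gfun b) ξ)‖
      ≤ (∫ x : ℝ, ‖gfun b x‖) * ‖𝓕 (gfun b) ξ‖ := by
    intro ξ
    rw [Complex.normSq_eq_norm_sq, Real.norm_eq_abs, _root_.abs_of_nonneg (by positivity), sq]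
    exact mul_le_mul_of_nonneg_right
      (VectorFourier.norm_fourierIntegral_le_integral_norm _ _ _ _ _) (norm_nonneg _)
  have hint : Integrable (fun ξ : ℝ => Complex.normSq (𝓕 (gfun b) ξ)) := by
    refine Integrable.mono' (g := fun ξ => (∫ x : ℝ, ‖gfun b x‖) * ‖𝓕 (gfun b) ξ‖)
      (hFf.norm.const_mul _) hcont.aestronglyMeasurable ?_
    filter_upwards with ξ using hbdd ξ
  refine hint.congr ?_
  filter_upwards with ξ
  rw [fourier_gfun_J hb]

lemma J_integrable {b : ℝ} (hb : 0 < b) : Integrable (Jfun b) := by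
  have h2π : (-(2 * π) : ℝ) ≠ 0 := by
    have := Real.pi_pos; intro h; nlinarith
  exact (MeasureTheory.integrable_comp_mul_left_iff (Jfun b) h2π).mp (J_integrable_comp hb)

lemma J_value {b : ℝ} (hb : 0 < b) :
    ∫ t : ℝ, Jfun b t
      = 2 * π * (Real.exp (-(2 * b) * Real.log 2) * Real.Gamma (2 * b)) := by
  have h := J_parseval hb
  rw [MeasureTheory.Measure.integral_comp_mul_left (Jfun b) (-(2*π))] at h
  have hπ : (0:ℝ) < 2 * π := by positivity
  rw [abs_inv, abs_neg, _root_.abs_of_pos hπ, smul_eq_mul] at h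
  field_simp at h ⊢
  linarith


lemma J_shift {b : ℝ} (hb : 0 < b) (t : ℝ) :
    t ^ 2 * Jfun b t = Jfun (b + 1) t - b ^ 2 * Jfun b t := by
  have hne : (b : ℂ) + t * Complex.I ≠ 0 := by
    intro h
    have := congrArg Complex.re h
    simp at this
    linarith
  have hΓ : Complex.Gamma ((b + 1 : ℝ) + t * Complex.I)
      = ((b : ℂ) + t * Complex.I) * Complex.Gamma (b + t * Complex.I) := by
    rw [show ((b + 1 : ℝ) : ℂ) + t * Complex.I = ((b : ℂ) + t * Complex.I) + 1 by push_cast; ring]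
    exact Complex.Gamma_add_one _ hne
  have habs : ‖(b : ℂ) + t * Complex.I‖ ^ 2 = b ^ 2 + t ^ 2 := by
    rw [Complex.sq_norm, Complex.normSq_add_mul_I]
  rw [Jfun, Jfun, hΓ, norm_mul, mul_pow, habs]
  ring

lemma J_numerator {b : ℝ} (hb : 0 < b) :
    ∫ t : ℝ, t ^ 2 * Jfun b t = (∫ t : ℝ, Jfun (b + 1) t) - b ^ 2 * ∫ t : ℝ, Jfun b t := by
  rw [show (fun t : ℝ => t ^ 2 * Jfun b t) = fun t => Jfun (b + 1) t - b ^ 2 * Jfun b t by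
      ext t; exact J_shift hb t]
  rw [integral_sub (J_integrable (by linarith)) ((J_integrable hb).const_mul _),
    integral_const_mul]

lemma J_ratio {b : ℝ} (hb : 0 < b) :
    (∫ t : ℝ, t ^ 2 * Jfun b t) / (∫ t : ℝ, Jfun b t) = b / 2 := by
  have hG : 0 < Real.Gamma (2 * b) := Real.Gamma_pos_of_pos (by linarith)
  have hJ : ∫ t : ℝ, Jfun b t
      = 2 * π * (Real.exp (-(2 * b) * Real.log 2) * Real.Gamma (2 * b)) := J_value hb
  have hJ1 : ∫ t : ℝ, Jfun (b + 1) t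
      = 2 * π * (Real.exp (-(2 * (b+1)) * Real.log 2) * Real.Gamma (2 * (b + 1))) :=
    J_value (by linarith)
  have hexp : Real.exp (-(2 * (b+1)) * Real.log 2)
      = Real.exp (-(2 * b) * Real.log 2) / 4 := by
    rw [eq_div_iff (by norm_num : (4:ℝ) ≠ 0)]
    have h4 : (4:ℝ) = Real.exp (Real.log 2) * Real.exp (Real.log 2) := by
      rw [Real.exp_log two_pos]; norm_num
    rw [h4, ← Real.exp_add, ← Real.exp_add]
    congr 1
    ring
  have hGa : Real.Gamma (2 * (b + 1)) = (2 * b + 1) * (2 * b) * Real.Gamma (2 * b) := by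
    rw [show 2 * (b + 1) = (2 * b + 1) + 1 by ring,
      Real.Gamma_add_one (by positivity),
      show 2 * b + 1 = (2 * b) + 1 by ring,
      Real.Gamma_add_one (by positivity)]
    ring
  rw [J_numerator hb, hJ, hJ1, hexp, hGa]
  have hπ : (0:ℝ) < π := Real.pi_pos
  have hE : 0 < Real.exp (-(2 * b) * Real.log 2) := Real.exp_pos _
  field_simp
  ring


/-- The dispersion of γ ↦ Γ(α-1/2+iγ)/Γ(α) equals α/2 - 1/4. -/
theorem dispersion_gamma_ratio (α : ℝ) (hα : 1 / 2 < α) :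
    (∫ t : ℝ, t ^ 2 *
        ‖Complex.Gamma (α - 1 / 2 + t * Complex.I) / Complex.Gamma α‖ ^ 2) /
      (∫ t : ℝ,
        ‖Complex.Gamma (α - 1 / 2 + t * Complex.I) / Complex.Gamma α‖ ^ 2)
      = α / 2 - 1 / 4 := by
  set b : ℝ := α - 1 / 2 with hbdef
  have hb : 0 < b := by simp [hbdef]; linarith
  have hαpos : 0 < α := by linarith
  have hΓα : 0 < Real.Gamma α := Real.Gamma_pos_of_pos hαpos
  have habs : ∀ t : ℝ, ‖Complex.Gamma (α - 1 / 2 + t * Complex.I)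
      / Complex.Gamma α‖ ^ 2 = Jfun b t / Real.Gamma α ^ 2 := by
    intro t
    rw [norm_div, show ((α : ℂ) - 1 / 2 + t * Complex.I) = ((b : ℂ) + t * Complex.I) by
        rw [hbdef]; push_cast; ring,
      Complex.Gamma_ofReal, Complex.norm_real, Real.norm_eq_abs, _root_.abs_of_pos hΓα, div_pow]
    rfl
  simp_rw [habs]
  have hmul : ∀ t : ℝ, t ^ 2 * (Jfun b t / Real.Gamma α ^ 2)
      = (t ^ 2 * Jfun b t) / Real.Gamma α ^ 2 := fun t => by ring
  simp_rw [hmul, integral_div]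
  have hD : (0:ℝ) < ∫ t : ℝ, Jfun b t := by
    rw [J_value hb]
    have := Real.pi_pos
    have := Real.exp_pos (-(2 * b) * Real.log 2)
    have := Real.Gamma_pos_of_pos (show (0:ℝ) < 2 * b by linarith)
    positivity
  have hc : (Real.Gamma α ^ 2 : ℝ) ≠ 0 := by positivity
  rw [show (∫ (a : ℝ), a ^ 2 * Jfun b a) / Real.Gamma α ^ 2 / ((∫ (a : ℝ), Jfun b a) / Real.Gamma α ^ 2)
      = (∫ (a : ℝ), a ^ 2 * Jfun b a) / (∫ (a : ℝ), Jfun b a) by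
    field_simp, J_ratio hb]
  rw [hbdef]; ring
end

section
/- For every α > 0 and every real y, ∫_{-∞}^{∞} |Γ(α+it)|² cos(yt) dt = π Γ(2α) / (2^{2α-1} cosh^{2α}(y/2)). -/
open Real MeasureTheory FourierTransform Set

noncomputable def gg (α u : ℝ) : ℝ := (2 * Real.cosh (u/2)) ^ (-(2*α))
noncomputable def g1 (α u : ℝ) : ℝ :=
  Real.sinh (u/2) * (-(2*α)) * (2*Real.cosh (u/2)) ^ (-(2*α)-1)
noncomputable def g2 (α u : ℝ) : ℝ :=
  Real.cosh (u/2) * (1/2) * (-(2*α)) * (2*Real.cosh (u/2)) ^ (-(2*α)-1)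
    + Real.sinh (u/2) * (-(2*α)) *
      (Real.sinh (u/2) * ((-(2*α)-1)) * (2*Real.cosh (u/2)) ^ (-(2*α)-1-1))

lemma two_cosh_pos (u : ℝ) : 0 < 2 * Real.cosh (u/2) := by positivity

lemma gg_pos (α u : ℝ) : 0 < gg α u := Real.rpow_pos_of_pos (two_cosh_pos u) _

lemma gg_le {α : ℝ} (hα : 0 < α) (u : ℝ) : gg α u ≤ Real.exp (-α * |u|) := by
  have h1 : Real.exp (|u|/2) ≤ 2 * Real.cosh (u/2) := by
    rw [Real.cosh_eq]
    rcases abs_cases u with ⟨h, _⟩ | ⟨h, _⟩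
    · rw [h]; nlinarith [Real.exp_pos (-(u/2)), Real.exp_pos (u/2)]
    · rw [h, show (-u/2 : ℝ) = -(u/2) by ring]
      nlinarith [Real.exp_pos (-(u/2)), Real.exp_pos (u/2)]
  have h2 : gg α u ≤ Real.exp (|u|/2) ^ (-(2*α)) :=
    Real.rpow_le_rpow_of_nonpos (Real.exp_pos _) h1 (by nlinarith)
  calc gg α u ≤ _ := h2
    _ = Real.exp (-α * |u|) := by
      rw [Real.rpow_def_of_pos (Real.exp_pos _), Real.log_exp]
      ring_nf

lemma hasDerivAt_two_cosh (u : ℝ) :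
    HasDerivAt (fun v : ℝ => 2 * Real.cosh (v/2)) (Real.sinh (u/2)) u := by
  have h : HasDerivAt (fun v : ℝ => v/2) (1/2) u := (hasDerivAt_id u).div_const 2
  have := (h.cosh).const_mul (2:ℝ)
  exact this.congr_deriv (by ring)

lemma hasDerivAt_gg (α : ℝ) (u : ℝ) : HasDerivAt (gg α) (g1 α u) u :=
  (hasDerivAt_two_cosh u).rpow_const (p := -(2*α)) (Or.inl (two_cosh_pos u).ne')

lemma hasDerivAt_g1 (α : ℝ) (u : ℝ) : HasDerivAt (g1 α) (g2 α u) u := by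
  have h : HasDerivAt (fun v : ℝ => v/2) (1/2) u := (hasDerivAt_id u).div_const 2
  have h1 : HasDerivAt (fun v : ℝ => Real.sinh (v/2) * (-(2*α)))
      (Real.cosh (u/2) * (1/2) * (-(2*α))) u := (h.sinh).mul_const _
  have h2 := (hasDerivAt_two_cosh u).rpow_const (p := -(2*α)-1) (Or.inl (two_cosh_pos u).ne')
  exact h1.mul h2

lemma cq_eq (α u : ℝ) :
    (2*Real.cosh (u/2)) * (2*Real.cosh (u/2)) ^ (-(2*α)-1) = gg α u := by
  rw [gg]
  nth_rewrite 1 [← Real.rpow_one (2*Real.cosh (u/2))]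
  rw [← Real.rpow_add (two_cosh_pos u)]
  norm_num

lemma cr_eq (α u : ℝ) :
    (2*Real.cosh (u/2)) * (2*Real.cosh (u/2)) ^ (-(2*α)-1-1)
      = (2*Real.cosh (u/2)) ^ (-(2*α)-1) := by
  nth_rewrite 1 [← Real.rpow_one (2*Real.cosh (u/2))]
  rw [← Real.rpow_add (two_cosh_pos u)]
  norm_num

lemma abs_g1_le (α : ℝ) (hα : 0 < α) (u : ℝ) : |g1 α u| ≤ α * gg α u := by
  have hc := two_cosh_pos u
  have hq : (0:ℝ) ≤ (2*Real.cosh (u/2)) ^ (-(2*α)-1) := Real.rpow_nonneg hc.le _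
  have hs : |Real.sinh (u/2)| ≤ Real.cosh (u/2) := by
    rw [Real.abs_sinh, ← Real.cosh_abs]; exact (Real.sinh_lt_cosh _).le
  have hcq := cq_eq α u
  rw [g1, abs_mul, abs_mul, abs_of_nonneg hq, abs_neg,
    abs_of_nonneg (by positivity : (0:ℝ) ≤ 2*α)]
  nlinarith [mul_nonneg (sub_nonneg.2 hs) hq, hα.le]

lemma abs_g2_le (α : ℝ) (hα : 0 < α) (u : ℝ) : |g2 α u| ≤ (α*(α+1)) * gg α u := by
  have hc := two_cosh_pos u
  have hcosh := Real.cosh_pos (x := u/2)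
  have hq : (0:ℝ) ≤ (2*Real.cosh (u/2)) ^ (-(2*α)-1) := Real.rpow_nonneg hc.le _
  have hr : (0:ℝ) ≤ (2*Real.cosh (u/2)) ^ (-(2*α)-1-1) := Real.rpow_nonneg hc.le _
  have hs : |Real.sinh (u/2)| ≤ Real.cosh (u/2) := by
    rw [Real.abs_sinh, ← Real.cosh_abs]; exact (Real.sinh_lt_cosh _).le
  have hcq := cq_eq α u
  have hcr := cr_eq α u
  have key : Real.cosh (u/2) * Real.cosh (u/2) * (2*Real.cosh (u/2)) ^ (-(2*α)-1-1)
      = gg α u / 4 := by nlinarith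
  have h1 : |Real.cosh (u/2) * (1/2) * (-(2*α)) * (2*Real.cosh (u/2)) ^ (-(2*α)-1)|
      ≤ (α/2) * gg α u := by
    rw [abs_mul, abs_mul, abs_mul, abs_neg,
      abs_of_nonneg (by positivity : (0:ℝ) ≤ 2*α), abs_of_nonneg hq,
      abs_of_nonneg hcosh.le, show |(1:ℝ)/2| = 1/2 by norm_num]
    nlinarith
  have hss : |Real.sinh (u/2)| * |Real.sinh (u/2)| *
      (2*Real.cosh (u/2)) ^ (-(2*α)-1-1) ≤ gg α u / 4 := by
    rw [← key]
    have := mul_le_mul hs hs (abs_nonneg _) hcosh.le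
    exact mul_le_mul_of_nonneg_right this hr
  have h2 : |Real.sinh (u/2) * (-(2*α)) *
      (Real.sinh (u/2) * ((-(2*α)-1)) * (2*Real.cosh (u/2)) ^ (-(2*α)-1-1))|
      ≤ (α*α + α/2) * gg α u := by
    rw [abs_mul, abs_mul, abs_mul, abs_mul, abs_neg,
      abs_of_nonneg (by positivity : (0:ℝ) ≤ 2*α), abs_of_nonneg hr,
      show |(-(2*α)-1)| = 2*α+1 by rw [abs_of_nonpos (by nlinarith)]; ring]
    nlinarith [hss, mul_pos (by positivity : (0:ℝ) < 2*α) (by positivity : (0:ℝ) < 2*α+1),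
      abs_nonneg (Real.sinh (u/2))]
  calc |g2 α u| ≤ _ := abs_add_le _ _
    _ ≤ (α/2) * gg α u + (α*α + α/2) * gg α u := add_le_add h1 h2
    _ = (α*(α+1)) * gg α u := by ring

lemma integrable_exp_neg_abs {b : ℝ} (hb : 0 < b) :
    Integrable fun x : ℝ => Real.exp (-b * |x|) := by
  have hI : IntegrableOn (fun x : ℝ => Real.exp (-b * x)) (Ioi 0) :=
    exp_neg_integrableOn_Ioi 0 hb
  have hIoi : IntegrableOn (fun x : ℝ => Real.exp (-b * |x|)) (Ioi 0) :=
    hI.congr_fun (fun x hx => by rw [abs_of_pos hx]) measurableSet_Ioi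
  have hIic : IntegrableOn (fun x : ℝ => Real.exp (-b * |x|)) (Iic 0) := by
    have m : MeasurableEmbedding fun x : ℝ => -x := (Homeomorph.neg ℝ).measurableEmbedding
    have h2 : IntegrableOn (fun x : ℝ => Real.exp (-b * |x|)) (Iic 0)
        (Measure.map (fun x : ℝ => -x) volume) := by
      rw [m.integrableOn_map_iff]
      simp_rw [Function.comp_def, abs_neg, neg_preimage, neg_Iic, neg_zero]
      exact (integrableOn_Ici_iff_integrableOn_Ioi (by finiteness)).mpr hIoi
    have : Measure.map (fun x : ℝ => -x) (volume : Measure ℝ) = volume :=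
      Measure.map_neg_eq_self volume
    rwa [this] at h2
  rw [← integrableOn_univ, ← Set.Iic_union_Ioi (a := (0:ℝ)), integrableOn_union]
  exact ⟨hIic, hIoi⟩

lemma continuous_gg (α : ℝ) : Continuous (gg α) := by
  have h : Differentiable ℝ (gg α) := fun u => (hasDerivAt_gg α u).differentiableAt
  exact h.continuous

lemma continuous_g1 (α : ℝ) : Continuous (g1 α) := by
  have h : Differentiable ℝ (g1 α) := fun u => (hasDerivAt_g1 α u).differentiableAt
  exact h.continuous

lemma integrable_gg {α : ℝ} (hα : 0 < α) : Integrable (gg α) :=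
  (integrable_exp_neg_abs hα).mono' (continuous_gg α).aestronglyMeasurable
    (ae_of_all _ fun u => by
      rw [Real.norm_eq_abs, abs_of_pos (gg_pos α u)]; exact gg_le hα u)

lemma integrable_g1 {α : ℝ} (hα : 0 < α) : Integrable (g1 α) :=
  ((integrable_exp_neg_abs hα).const_mul α).mono' (continuous_g1 α).aestronglyMeasurable
    (ae_of_all _ fun u => by
      rw [Real.norm_eq_abs]
      exact (abs_g1_le α hα u).trans (mul_le_mul_of_nonneg_left (gg_le hα u) hα.le))

lemma continuous_g2 (α : ℝ) : Continuous (g2 α) := by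
  have hcosh : Continuous fun u : ℝ => Real.cosh (u/2) :=
    Real.continuous_cosh.comp (continuous_id.div_const 2)
  have hsinh : Continuous fun u : ℝ => Real.sinh (u/2) :=
    Real.continuous_sinh.comp (continuous_id.div_const 2)
  have haux : ∀ p : ℝ, Continuous (fun u : ℝ => (2*Real.cosh (u/2)) ^ p) := fun p =>
    (continuous_const.mul hcosh).rpow_const (fun u => Or.inl (two_cosh_pos u).ne')
  exact (((hcosh.mul continuous_const).mul continuous_const).mul (haux _)).add
    ((hsinh.mul continuous_const).mul ((hsinh.mul continuous_const).mul (haux _)))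

lemma integrable_g2 {α : ℝ} (hα : 0 < α) : Integrable (g2 α) :=
  ((integrable_exp_neg_abs hα).const_mul (α*(α+1))).mono'
    (continuous_g2 α).aestronglyMeasurable
    (ae_of_all _ fun u => by
      rw [Real.norm_eq_abs]
      refine (abs_g2_le α hα u).trans (mul_le_mul_of_nonneg_left (gg_le hα u) ?_)
      positivity)

lemma key_beta (α : ℝ) (hα : 0 < α) (t : ℝ) :
    ∫ u : ℝ, (gg α u : ℂ) * Complex.exp ((t * u : ℝ) * Complex.I)
      = Complex.betaIntegral (α + t*Complex.I) (α - t*Complex.I) := by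
  set a : ℂ := (α:ℂ) + t*Complex.I with ha
  set b : ℂ := (α:ℂ) - t*Complex.I with hb
  set φ : ℝ → ℝ := fun u => Real.exp u / (1 + Real.exp u) with hφ
  set φ' : ℝ → ℝ := fun u => Real.exp u / (1 + Real.exp u)^2 with hφ'
  have h1e : ∀ u : ℝ, (0:ℝ) < 1 + Real.exp u := fun u => by positivity
  have hderiv : ∀ u, HasDerivAt φ (φ' u) u := by
    intro u
    have h1 : HasDerivAt (fun v : ℝ => Real.exp v) (Real.exp u) u := Real.hasDerivAt_exp u
    have h2 : HasDerivAt (fun v : ℝ => 1 + Real.exp v) (Real.exp u) u := h1.const_add 1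
    have := h1.div h2 (h1e u).ne'
    exact this.congr_deriv (by simp only [hφ']; ring)
  have hφpos : ∀ u, 0 < φ u := fun u => div_pos (Real.exp_pos u) (h1e u)
  have hφlt : ∀ u, φ u < 1 := fun u => by
    rw [hφ, div_lt_one (h1e u)]; linarith [Real.exp_pos u]
  have hmono : StrictMono φ := by
    apply strictMono_of_deriv_pos
    intro x
    rw [(hderiv x).deriv, hφ']
    positivity
  have himg : φ '' univ = Ioo (0:ℝ) 1 := by
    ext x
    constructor
    · rintro ⟨u, -, rfl⟩; exact ⟨hφpos u, hφlt u⟩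
    · rintro ⟨h0, h1⟩
      refine ⟨Real.log (x/(1-x)), trivial, ?_⟩
      have hx1 : (0:ℝ) < 1 - x := by linarith
      have hxx : (0:ℝ) < x/(1-x) := div_pos h0 hx1
      rw [hφ]
      simp only
      rw [Real.exp_log hxx]
      field_simp
      ring
  have hh := integral_image_eq_integral_abs_deriv_smul MeasurableSet.univ
    (fun x _ => (hderiv x).hasDerivWithinAt) hmono.injective.injOn
    (fun x : ℝ => (x:ℂ)^(a-1) * (1-(x:ℂ))^(b-1))
  rw [himg, Measure.restrict_univ] at hh
  rw [Complex.betaIntegral, intervalIntegral.integral_of_le zero_le_one,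
    integral_Ioc_eq_integral_Ioo, hh]
  apply integral_congr_ae
  apply ae_of_all
  intro u
  have he : (0:ℝ) < Real.exp u := Real.exp_pos u
  have hφ'pos : 0 < φ' u := by rw [hφ']; positivity
  have h1φ : (1:ℝ) - φ u = (1 + Real.exp u)⁻¹ := by
    rw [hφ]; field_simp
    ring
  have c1 : ((φ u : ℝ) : ℂ) ≠ 0 := Complex.ofReal_ne_zero.2 (hφpos u).ne'
  have c2 : ((1 - φ u : ℝ) : ℂ) ≠ 0 := by
    rw [h1φ]; exact Complex.ofReal_ne_zero.2 (by positivity)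
  have e2 : (1 : ℂ) - ((φ u : ℝ) : ℂ) = ((1 - φ u : ℝ) : ℂ) := by push_cast; ring
  simp only []
  have h1φpos : (0:ℝ) < 1 - φ u := by rw [h1φ]; positivity
  rw [e2, abs_of_pos hφ'pos, Complex.real_smul,
    Complex.cpow_def_of_ne_zero c1, Complex.cpow_def_of_ne_zero c2,
    ← Complex.ofReal_log (hφpos u).le, ← Complex.ofReal_log h1φpos.le]
  have hgg : ((gg α u : ℝ) : ℂ)
      = Complex.exp (((Real.log (2*Real.cosh (u/2)) * (-(2*α)) : ℝ) : ℂ)) := by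
    rw [gg, Real.rpow_def_of_pos (two_cosh_pos u), Complex.ofReal_exp]
  have hφc : ((φ' u : ℝ) : ℂ) = Complex.exp ((Real.log (φ' u) : ℝ) : ℂ) := by
    rw [← Complex.ofReal_exp, Real.exp_log hφ'pos]
  have A : Real.log (φ u) = u - Real.log (1+Real.exp u) := by
    rw [hφ]; simp only []
    rw [Real.log_div he.ne' (h1e u).ne', Real.log_exp]
  have B : Real.log (1 - φ u) = -Real.log (1+Real.exp u) := by
    rw [h1φ, Real.log_inv]
  have C : Real.log (φ' u) = u - 2*Real.log (1+Real.exp u) := by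
    rw [hφ']; simp only []
    rw [Real.log_div he.ne' (by positivity), Real.log_exp, Real.log_pow]
    push_cast; ring
  have D : Real.log (2*Real.cosh (u/2)) = -(u/2) + Real.log (1+Real.exp u) := by
    have hc : 2*Real.cosh (u/2) = Real.exp (-(u/2)) * (1+Real.exp u) := by
      rw [Real.cosh_eq]
      rw [mul_add, mul_one, ← Real.exp_add]
      ring_nf
    rw [hc, Real.log_mul (Real.exp_pos _).ne' (h1e u).ne', Real.log_exp]
  rw [hgg, hφc, ← Complex.exp_add, ← Complex.exp_add, ← Complex.exp_add]
  congr 1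
  rw [A, B, C, D, ha, hb]
  push_cast
  ring

lemma beta_eq {a b : ℂ} (ha : 0 < a.re) (hb : 0 < b.re)
    (hab : Complex.Gamma (a+b) ≠ 0) :
    Complex.betaIntegral a b = Complex.Gamma a * Complex.Gamma b / Complex.Gamma (a+b) := by
  rw [Complex.Gamma_mul_Gamma_eq_betaIntegral ha hb]
  field_simp

lemma integrable_fourier_of_deriv2 {f : ℝ → ℂ} (hf : Integrable f)
    (hdiff : Differentiable ℝ f) (hf1 : Integrable (deriv f))
    (hdiff1 : Differentiable ℝ (deriv f)) (hf2 : Integrable (deriv (deriv f))) :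
    Integrable (𝓕 f) := by
  set F := 𝓕 f with hF
  have h1 : 𝓕 (deriv f) = fun ξ : ℝ => (2 * π * Complex.I * ξ) • F ξ :=
    Real.fourier_deriv hf hdiff hf1
  have h2 : 𝓕 (deriv (deriv f))
      = fun ξ : ℝ => (2 * π * Complex.I * ξ) • ((2 * π * Complex.I * ξ) • F ξ) := by
    rw [Real.fourier_deriv hf1 hdiff1 hf2, h1]
  set C0 := ∫ v, ‖f v‖ with hC0
  set C2 := ∫ v, ‖deriv (deriv f) v‖ with hC2
  have hC0n : 0 ≤ C0 := integral_nonneg (fun v => norm_nonneg _)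
  have hC2n : 0 ≤ C2 := integral_nonneg (fun v => norm_nonneg _)
  have hbound : ∀ ξ : ℝ, ‖F ξ‖ ≤ (C0 + C2 / (4*π^2)) * (1 + ξ^2)⁻¹ := by
    intro ξ
    have hb0 : ‖F ξ‖ ≤ C0 := VectorFourier.norm_fourierIntegral_le_integral_norm _ _ _ _ _
    have hb2 : ‖𝓕 (deriv (deriv f)) ξ‖ ≤ C2 :=
      VectorFourier.norm_fourierIntegral_le_integral_norm _ _ _ _ _
    rw [h2] at hb2
    have habs : ‖(2 * (π:ℂ) * Complex.I * (ξ:ℂ))‖ = 2*π*|ξ| := by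
      simp [map_mul, abs_of_pos pi_pos]
    have hnorm : ‖(2 * (π:ℂ) * Complex.I * (ξ:ℂ)) • ((2 * (π:ℂ) * Complex.I * (ξ:ℂ)) • F ξ)‖
        = 4*π^2 * ξ^2 * ‖F ξ‖ := by
      rw [norm_smul, norm_smul, habs]
      have : (2*π*|ξ|) * (2*π*|ξ| * ‖F ξ‖) = 4*π^2*(|ξ|^2) * ‖F ξ‖ := by ring
      rw [this, sq_abs]
    rw [hnorm] at hb2
    have hπ : (0:ℝ) < 4*π^2 := by positivity
    have h3 : ξ^2 * ‖F ξ‖ ≤ C2/(4*π^2) := by rw [le_div_iff₀ hπ]; nlinarith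
    have h4 : (0:ℝ) < 1 + ξ^2 := by positivity
    have h5 : ‖F ξ‖ * (1+ξ^2) ≤ C0 + C2/(4*π^2) := by nlinarith
    calc ‖F ξ‖ = ‖F ξ‖ * (1+ξ^2) * (1+ξ^2)⁻¹ := by field_simp
      _ ≤ (C0 + C2/(4*π^2)) * (1+ξ^2)⁻¹ :=
        mul_le_mul_of_nonneg_right h5 (inv_nonneg.2 h4.le)
  refine ((integrable_inv_one_add_sq.const_mul (C0 + C2/(4*π^2))).mono'
    ?_ (ae_of_all _ fun ξ => hbound ξ))
  exact (VectorFourier.fourierIntegral_continuous Real.continuous_fourierChar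
    (by exact continuous_inner) hf).aestronglyMeasurable

/-- ∫_{-∞}^{∞} |Γ(α+it)|² cos(yt) dt = π Γ(2α)/(2^{2α-1} cosh^{2α}(y/2)). -/
theorem integral_sq_abs_Gamma_cos (α : ℝ) (hα : 0 < α) (y : ℝ) :
    ∫ t : ℝ, ‖Complex.Gamma (α + t * Complex.I)‖ ^ 2 * Real.cos (y * t)
      = π * Real.Gamma (2 * α) / ((2 : ℝ) ^ (2 * α - 1) * Real.cosh (y / 2) ^ (2 * α)) := by
  have hπ : (0:ℝ) < π := pi_pos
  set Gc : ℝ → ℂ := fun u => ((gg α u : ℝ) : ℂ) with hGcdef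
  have hGc : Integrable Gc := (integrable_gg hα).ofReal
  have hd : ∀ u, HasDerivAt Gc ((g1 α u : ℝ) : ℂ) u := fun u => (hasDerivAt_gg α u).ofReal_comp
  have hdiff : Differentiable ℝ Gc := fun u => (hd u).differentiableAt
  have hderiv : deriv Gc = fun u => ((g1 α u : ℝ) : ℂ) := funext fun u => (hd u).deriv
  have hG1 : Integrable (deriv Gc) := by rw [hderiv]; exact (integrable_g1 hα).ofReal
  have hd1 : ∀ u, HasDerivAt (deriv Gc) ((g2 α u : ℝ) : ℂ) u := by
    rw [hderiv]; exact fun u => (hasDerivAt_g1 α u).ofReal_comp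
  have hdiff1 : Differentiable ℝ (deriv Gc) := fun u => (hd1 u).differentiableAt
  have hderiv2 : deriv (deriv Gc) = fun u => ((g2 α u : ℝ) : ℂ) :=
    funext fun u => (hd1 u).deriv
  have hG2 : Integrable (deriv (deriv Gc)) := by
    rw [hderiv2]; exact (integrable_g2 hα).ofReal
  have hFint : Integrable (𝓕 Gc) := integrable_fourier_of_deriv2 hGc hdiff hG1 hdiff1 hG2
  have hΓne : Complex.Gamma ((α:ℂ)+(α:ℂ)) ≠ 0 := by
    apply Complex.Gamma_ne_zero_of_re_pos
    simp only [Complex.add_re, Complex.ofReal_re]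
    linarith
  have hre1 : ∀ s : ℝ, (0:ℝ) < ((α:ℂ) + (s:ℂ)*Complex.I).re := fun s => by
    simpa using hα
  have hre2 : ∀ s : ℝ, (0:ℝ) < ((α:ℂ) - (s:ℂ)*Complex.I).re := fun s => by
    simpa using hα
  have key2 : ∀ ξ : ℝ, 𝓕 Gc ξ = Complex.Gamma ((α:ℂ) + ((-(2*π*ξ) : ℝ) : ℂ)*Complex.I)
      * Complex.Gamma ((α:ℂ) - ((-(2*π*ξ) : ℝ) : ℂ)*Complex.I)
        / Complex.Gamma ((α:ℂ)+(α:ℂ)) := by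
    intro ξ
    rw [Real.fourier_real_eq_integral_exp_smul]
    have hpt : ∀ v : ℝ, Complex.exp (((-2*π*v*ξ : ℝ) : ℂ) * Complex.I) • Gc v
        = ((gg α v : ℝ) : ℂ) * Complex.exp ((((-(2*π*ξ)) * v : ℝ) : ℂ) * Complex.I) := by
      intro v
      rw [smul_eq_mul, mul_comm, show (-2*π*v*ξ : ℝ) = (-(2*π*ξ))*v from by ring]
    simp_rw [hpt]
    have hab : Complex.Gamma (((α:ℂ) + ((-(2*π*ξ) : ℝ) : ℂ)*Complex.I)
        + ((α:ℂ) - ((-(2*π*ξ) : ℝ) : ℂ)*Complex.I)) ≠ 0 := by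
      rw [show ((α:ℂ) + ((-(2*π*ξ) : ℝ) : ℂ)*Complex.I)
        + ((α:ℂ) - ((-(2*π*ξ) : ℝ) : ℂ)*Complex.I) = (α:ℂ)+(α:ℂ) from by ring]
      exact hΓne
    rw [key_beta α hα (-(2*π*ξ)), beta_eq (hre1 _) (hre2 _) hab,
      show ((α:ℂ) + ((-(2*π*ξ) : ℝ) : ℂ)*Complex.I)
        + ((α:ℂ) - ((-(2*π*ξ) : ℝ) : ℂ)*Complex.I) = (α:ℂ)+(α:ℂ) from by ring]
  have hΓΓ : ∀ t : ℝ, Complex.Gamma ((α:ℂ) + (t:ℂ)*Complex.I)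
      * Complex.Gamma ((α:ℂ) - (t:ℂ)*Complex.I)
      = Complex.Gamma ((α:ℂ)+(α:ℂ)) * 𝓕 Gc (-(1/(2*π)) * t) := by
    intro t
    have h := key2 (-(1/(2*π)) * t)
    rw [show (-(2*π*(-(1/(2*π)) * t)) : ℝ) = t from by field_simp] at h
    rw [h]
    exact (mul_div_cancel₀ _ hΓne).symm
  set H : ℝ → ℂ := fun t => Complex.exp (((t*y : ℝ) : ℂ) * Complex.I)
      * (Complex.Gamma ((α:ℂ) + (t:ℂ)*Complex.I)
        * Complex.Gamma ((α:ℂ) - (t:ℂ)*Complex.I)) with hHdef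
  have hHint : Integrable H := by
    have hc : (-(1/(2*π)) : ℝ) ≠ 0 := by
      simp only [ne_eq, neg_eq_zero, div_eq_zero_iff]
      push_neg
      exact ⟨one_ne_zero, by positivity⟩
    have h1 : Integrable (fun t : ℝ => 𝓕 Gc (-(1/(2*π)) * t)) := hFint.comp_mul_left' hc
    have hcont : Continuous fun t : ℝ => Complex.exp (((t*y : ℝ) : ℂ) * Complex.I) :=
      Complex.continuous_exp.comp
        ((Complex.continuous_ofReal.comp (continuous_id.mul continuous_const)).mul
          continuous_const)
    have h2 : Integrable (fun t : ℝ => Complex.exp (((t*y : ℝ) : ℂ) * Complex.I)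
        * (Complex.Gamma ((α:ℂ)+(α:ℂ)) * 𝓕 Gc (-(1/(2*π)) * t))) :=
      (h1.const_mul _).bdd_mul hcont.aestronglyMeasurable
        (ae_of_all _ fun t => le_of_eq (Complex.norm_exp_ofReal_mul_I _))
    exact h2.congr (ae_of_all _ fun t => by rw [hHdef]; simp only []; rw [hΓΓ t])
  have hinv : 𝓕⁻ (𝓕 Gc) y = Gc y :=
    hGc.fourierInv_fourier_eq hFint
      ((Complex.continuous_ofReal.comp (continuous_gg α)).continuousAt)
  rw [Real.fourierInv_eq_fourier_neg,
    Real.fourier_real_eq_integral_exp_smul] at hinv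
  have hpt2 : ∀ ξ : ℝ, Complex.exp (((-2*π*ξ*(-y) : ℝ) : ℂ) * Complex.I) • 𝓕 Gc ξ
      = H (2*π*ξ) / Complex.Gamma ((α:ℂ)+(α:ℂ)) := by
    intro ξ
    rw [smul_eq_mul, key2 ξ, hHdef]
    simp only []
    rw [show (-2*π*ξ*(-y) : ℝ) = (2*π*ξ)*y from by ring]
    have hsym : Complex.Gamma ((α:ℂ) + ((-(2*π*ξ) : ℝ) : ℂ)*Complex.I)
        * Complex.Gamma ((α:ℂ) - ((-(2*π*ξ) : ℝ) : ℂ)*Complex.I)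
        = Complex.Gamma ((α:ℂ) + ((2*π*ξ : ℝ) : ℂ)*Complex.I)
          * Complex.Gamma ((α:ℂ) - ((2*π*ξ : ℝ) : ℂ)*Complex.I) := by
      rw [show ((-(2*π*ξ) : ℝ) : ℂ) = -(((2*π*ξ) : ℝ) : ℂ) from by push_cast; ring]
      rw [show ((α:ℂ) + -(((2*π*ξ) : ℝ) : ℂ)*Complex.I)
          = ((α:ℂ) - (((2*π*ξ) : ℝ) : ℂ)*Complex.I) from by ring,
        show ((α:ℂ) - -(((2*π*ξ) : ℝ) : ℂ)*Complex.I)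
          = ((α:ℂ) + (((2*π*ξ) : ℝ) : ℂ)*Complex.I) from by ring]
      rw [mul_comm]
    rw [hsym]; ring
  have heq : (∫ ξ : ℝ, H (2*π*ξ)) / Complex.Gamma ((α:ℂ)+(α:ℂ)) = Gc y := by
    rw [← integral_div, ← hinv]
    exact integral_congr_ae (ae_of_all _ fun ξ => (hpt2 ξ).symm)
  have heq2 : ∫ ξ : ℝ, H (2*π*ξ) = Gc y * Complex.Gamma ((α:ℂ)+(α:ℂ)) :=
    (div_eq_iff hΓne).1 heq
  have hcomp : ∫ ξ : ℝ, H (2*π*ξ) = |(2*π)⁻¹| • ∫ t, H t :=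
    MeasureTheory.Measure.integral_comp_mul_left H (2*π)
  have h2πc : ((2*π : ℝ) : ℂ) ≠ 0 := Complex.ofReal_ne_zero.2 (by positivity)
  have hIH : ∫ t, H t = ((2*π : ℝ) : ℂ) * (Gc y * Complex.Gamma ((α:ℂ)+(α:ℂ))) := by
    rw [hcomp, abs_of_pos (by positivity : (0:ℝ) < (2*π)⁻¹), Complex.real_smul,
      Complex.ofReal_inv] at heq2
    exact (inv_mul_eq_iff_eq_mul₀ h2πc).1 heq2
  have hreH : ∀ t : ℝ, (H t).re
      = ‖Complex.Gamma ((α:ℂ) + (t:ℂ)*Complex.I)‖^2 * Real.cos (y*t) := by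
    intro t
    have hconj : ((α:ℂ) - (t:ℂ)*Complex.I) = (starRingEnd ℂ) ((α:ℂ) + (t:ℂ)*Complex.I) := by
      simp [map_add, Complex.conj_ofReal, map_mul, Complex.conj_I]
      ring
    rw [hHdef]
    simp only []
    rw [hconj, Complex.Gamma_conj, Complex.mul_conj, mul_comm, Complex.re_ofReal_mul,
      Complex.exp_ofReal_mul_I_re, ← Complex.sq_norm, mul_comm t y]
  have hmain : ∫ t : ℝ, ‖Complex.Gamma ((α:ℂ) + (t:ℂ) * Complex.I)‖ ^ 2
      * Real.cos (y * t) = (∫ t, H t).re := by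
    have hcc := Complex.reCLM.integral_comp_comm hHint
    simp only [Complex.reCLM_apply] at hcc
    rw [← hcc]
    exact integral_congr_ae (ae_of_all _ fun t => (hreH t).symm)
  rw [hmain, hIH]
  have hΓval : Complex.Gamma ((α:ℂ)+(α:ℂ)) = ((Real.Gamma (2*α) : ℝ) : ℂ) := by
    rw [show ((α:ℂ)+(α:ℂ)) = ((2*α : ℝ) : ℂ) from by push_cast; ring, Complex.Gamma_ofReal]
  rw [hΓval, show Gc y = ((gg α y : ℝ) : ℂ) from rfl,
    show ((2*π : ℝ) : ℂ) * (((gg α y : ℝ) : ℂ) * ((Real.Gamma (2*α) : ℝ) : ℂ))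
      = (((2*π) * (gg α y * Real.Gamma (2*α)) : ℝ) : ℂ) from by push_cast; ring,
    Complex.ofReal_re]
  rw [gg]
  have hcosh := Real.cosh_pos (x := y/2)
  rw [Real.rpow_neg (two_cosh_pos y).le, Real.mul_rpow (by norm_num : (0:ℝ) ≤ 2) hcosh.le,
    Real.rpow_sub (by norm_num : (0:ℝ) < 2), Real.rpow_one]
  have h1 : (0:ℝ) < (2:ℝ)^(2*α) := Real.rpow_pos_of_pos two_pos _
  have h2 : (0:ℝ) < Real.cosh (y/2)^(2*α) := Real.rpow_pos_of_pos hcosh _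
  field_simp
end

section
/- Let μ, σ > 0, α = (μ/σ)², λ = μ/α, and let j be a real number with |j| ≤ ησ for fixed η. As α → ∞ (with μ = √α σ), w_{α,λ}(μ+j) = (1/(μ+j))·√(α/(2π))·exp(-(α/2)(j/μ)²)·(1 + O(1/√α)). -/
open Real

section GammaLocalCLTHelpers

open Filter Finset Nat Stirling



lemma sqrtpi_le_stirlingSeq {n : ℕ} (hn : 1 ≤ n) : Real.sqrt π ≤ stirlingSeq n := by
  obtain ⟨k, rfl⟩ := Nat.exists_eq_add_of_le hn
  have h := Stirling.tendsto_stirlingSeq_sqrt_pi.comp (tendsto_add_atTop_nat (1 + k))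
  refine le_of_tendsto h (Filter.Eventually.of_forall fun m => ?_)
  have := Stirling.stirlingSeq'_antitone (Nat.le_add_left k m)
  simpa [Function.comp, Nat.succ_eq_add_one, Nat.add_comm, Nat.add_assoc, Nat.add_left_comm] using this

lemma stirling_diff (k : ℕ) (hk : 1 ≤ k) {m : ℕ} (hm : k ≤ m) :
    Real.log (stirlingSeq (k+1)) ≤ Real.log (stirlingSeq (m+1)) + (1/4) * (1/k - 1/m) := by
  induction m, hm using Nat.le_induction with
  | base => simp
  | succ m hm ih =>
    have h1 : Real.log (stirlingSeq (m+1)) - Real.log (stirlingSeq (m+2)) ≤ 1/(4*(↑(m+1):ℝ)^2) :=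
      Stirling.log_stirlingSeq_sub_log_stirlingSeq_succ (m+1)
    have hm1 : (1:ℝ) ≤ m := by exact_mod_cast hk.trans hm
    have hmpos : (0:ℝ) < m := by linarith
    have h2 : 1/(4*((m:ℝ)+1)^2) ≤ (1/4) * (1/(m:ℝ) - 1/((m:ℝ)+1)) := by
      have e : (1/(m:ℝ) - 1/((m:ℝ)+1)) = 1/((m:ℝ)*((m:ℝ)+1)) := by field_simp; ring
      have e2 : (1/4:ℝ) * (1/((m:ℝ)*((m:ℝ)+1))) = 1/(4*((m:ℝ)*((m:ℝ)+1))) := by field_simp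
      rw [e, e2]
      apply one_div_le_one_div_of_le (by positivity)
      nlinarith
    push_cast at h1 ih ⊢
    linarith

lemma stirlingSeq_le {n : ℕ} (hn : 2 ≤ n) : stirlingSeq n ≤ Real.sqrt π * Real.exp (1/(2*n)) := by
  obtain ⟨k, rfl⟩ : ∃ k, n = (k+1)+1 := ⟨n - 2, by omega⟩
  set j := k + 1 with hj
  have hj1 : 1 ≤ j := Nat.le_add_left 1 k
  have key : Real.log (stirlingSeq (j+1)) ≤ Real.log (Real.sqrt π) + (1/4) * (1/j) := by
    have htend : Tendsto (fun m : ℕ => Real.log (stirlingSeq (m+1)) + (1/4) * (1/(j:ℝ) - 1/m))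
        atTop (nhds (Real.log (Real.sqrt π) + (1/4) * (1/(j:ℝ) - 0))) := by
      apply Tendsto.add
      · exact ((Real.continuousAt_log (by positivity)).tendsto.comp
          (Stirling.tendsto_stirlingSeq_sqrt_pi.comp (tendsto_add_atTop_nat 1)))
      · exact (tendsto_const_nhds.sub tendsto_one_div_atTop_nhds_zero_nat).const_mul _
    have := ge_of_tendsto htend (Filter.eventually_atTop.2 ⟨j, fun m hm => stirling_diff j hj1 hm⟩)
    simpa using this
  have hpos : 0 < stirlingSeq (j+1) := Stirling.stirlingSeq'_pos j
  have h := Real.exp_le_exp.2 key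
  rw [Real.exp_log hpos, Real.exp_add, Real.exp_log (by positivity)] at h
  refine h.trans (mul_le_mul_of_nonneg_left (Real.exp_le_exp.2 ?_) (Real.sqrt_nonneg π))
  have hj1' : (1:ℝ) ≤ j := by exact_mod_cast hj1
  have e : ((1:ℝ)/4) * (1/(j:ℝ)) = 1/(4*(j:ℝ)) := by field_simp
  rw [e]
  apply one_div_le_one_div_of_le (by positivity)
  push_cast
  linarith

lemma log_factorial_bounds {n : ℕ} (hn : 2 ≤ n) :
    ((n:ℝ) + 1/2) * Real.log n - n + (1/2)*Real.log (2*π) ≤ Real.log (n !) ∧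
    Real.log (n !) ≤ ((n:ℝ) + 1/2) * Real.log n - n + (1/2)*Real.log (2*π) + 1/(2*n) := by
  have hn0 : (0:ℝ) < n := by positivity
  have hform := Stirling.log_stirlingSeq_formula n
  -- log s n = log n! - 1/2 log(2n) - n log(n/e)
  have hlogne : Real.log ((n:ℝ) / Real.exp 1) = Real.log n - 1 := by
    rw [Real.log_div (by positivity) (Real.exp_ne_zero 1), Real.log_exp]
  have hlog2n : Real.log (2*(n:ℝ)) = Real.log 2 + Real.log n :=
    Real.log_mul two_ne_zero (ne_of_gt hn0)
  have hlog2pi : Real.log (2*π) = Real.log 2 + Real.log π :=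
    Real.log_mul two_ne_zero (ne_of_gt Real.pi_pos)
  have hfac : Real.log (n !) = Real.log (stirlingSeq n) + (1/2)*(Real.log 2 + Real.log n)
      + (n:ℝ) * (Real.log n - 1) := by
    rw [hform, hlog2n, hlogne]
    ring
  have hspos : 0 < stirlingSeq n := by
    have : n = (n-1) + 1 := by omega
    rw [this]; exact Stirling.stirlingSeq'_pos _
  have hlo : (1/2) * Real.log π ≤ Real.log (stirlingSeq n) := by
    have := sqrtpi_le_stirlingSeq (by omega : 1 ≤ n)
    have h2 := Real.log_le_log (by positivity) this
    rw [Real.log_sqrt Real.pi_pos.le] at h2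
    linarith
  have hhi : Real.log (stirlingSeq n) ≤ (1/2) * Real.log π + 1/(2*n) := by
    have := stirlingSeq_le hn
    have h2 := Real.log_le_log hspos this
    rw [Real.log_mul (by positivity) (Real.exp_ne_zero _), Real.log_sqrt Real.pi_pos.le,
      Real.log_exp] at h2
    linarith
  constructor
  · rw [hfac, hlog2pi]; ring_nf; ring_nf at hlo; linarith
  · rw [hfac, hlog2pi]; ring_nf; ring_nf at hhi; linarith

lemma gamma_interp_upper {n : ℕ} (hn : 2 ≤ n) {t : ℝ} (ht0 : 0 ≤ t) (ht1 : t ≤ 1) :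
    Real.log (Real.Gamma ((n:ℝ) + t)) ≤ Real.log (n !) + (t - 1) * Real.log n := by
  have hn0 : (0:ℝ) < n := by positivity
  have hconv := Real.convexOn_log_Gamma
  have h := hconv.2 (Set.mem_Ioi.2 hn0) (Set.mem_Ioi.2 (by positivity : (0:ℝ) < (n:ℝ)+1))
    (by linarith : (0:ℝ) ≤ 1 - t) ht0 (by ring)
  simp only [smul_eq_mul, Function.comp] at h
  have hx : (1-t) * (n:ℝ) + t * ((n:ℝ)+1) = (n:ℝ) + t := by ring
  rw [hx] at h
  have hg1 : Real.Gamma ((n:ℝ)) = ((n-1)!) := by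
    have : ((n:ℝ)) = ((n-1:ℕ):ℝ) + 1 := by
      have : (n-1)+1 = n := by omega
      rw [← this]; push_cast; ring
    rw [this, Real.Gamma_nat_eq_factorial]
  have hg2 : Real.Gamma ((n:ℝ)+1) = (n !) := by
    rw [Real.Gamma_nat_eq_factorial]
  rw [hg1, hg2] at h
  have hfac : (n ! : ℝ) = (n:ℝ) * ((n-1)!) := by
    have : n ! = n * (n-1)! := by
      conv_lhs => rw [show n = (n-1)+1 by omega]
      rw [Nat.factorial_succ]; congr 1; omega
    rw [this]; push_cast; ring
  have hlogfac : Real.log ((n-1)! : ℝ) = Real.log (n !) - Real.log n := by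
    rw [hfac, Real.log_mul (ne_of_gt hn0) (by positivity)]; ring
  calc Real.log (Real.Gamma ((n:ℝ)+t)) ≤ (1-t) * Real.log ((n-1)! : ℝ) + t * Real.log (n !) := h
    _ = Real.log (n !) + (t-1) * Real.log n := by rw [hlogfac]; ring

lemma gamma_interp_lower {n : ℕ} (hn : 2 ≤ n) {t : ℝ} (ht0 : 0 ≤ t) (ht1 : t ≤ 1) :
    Real.log (n !) - (1 - t) * Real.log ((n:ℝ) + t) ≤ Real.log (Real.Gamma ((n:ℝ) + t)) := by
  have hn0 : (0:ℝ) < n := by positivity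
  have hnt : (0:ℝ) < (n:ℝ) + t := by linarith
  have hconv := Real.convexOn_log_Gamma
  have h := hconv.2 (Set.mem_Ioi.2 hnt) (Set.mem_Ioi.2 (by linarith : (0:ℝ) < (n:ℝ)+t+1))
    ht0 (by linarith : (0:ℝ) ≤ 1 - t) (by ring)
  simp only [smul_eq_mul, Function.comp] at h
  have hx : t * ((n:ℝ)+t) + (1-t) * ((n:ℝ)+t+1) = (n:ℝ) + 1 := by ring
  rw [hx] at h
  have hg2 : Real.Gamma ((n:ℝ)+1) = (n !) := Real.Gamma_nat_eq_factorial n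
  have hgadd : Real.Gamma ((n:ℝ)+t+1) = ((n:ℝ)+t) * Real.Gamma ((n:ℝ)+t) :=
    Real.Gamma_add_one (ne_of_gt hnt)
  have hgpos : 0 < Real.Gamma ((n:ℝ)+t) := Real.Gamma_pos_of_pos hnt
  rw [hg2, hgadd, Real.log_mul (ne_of_gt hnt) (ne_of_gt hgpos)] at h
  nlinarith [h]

set_option maxHeartbeats 1000000 in
lemma logGamma_approx {α : ℝ} (hα : 4 ≤ α) :
    |(α - 1/2) * Real.log α - α + (1/2) * Real.log (2*π) - Real.log (Real.Gamma α)| ≤ 4/α := by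
  have hα0 : (0:ℝ) < α := by linarith
  set n := ⌊α⌋₊ with hn
  have hn4 : 4 ≤ n := Nat.le_floor (by exact_mod_cast hα)
  have hn2 : 2 ≤ n := by omega
  have hna : (n:ℝ) ≤ α := Nat.floor_le hα0.le
  have han1 : α < (n:ℝ) + 1 := Nat.lt_floor_add_one α
  have hn4R : (4:ℝ) ≤ (n:ℝ) := by exact_mod_cast hn4
  have hn0 : (0:ℝ) < n := by linarith
  set t := α - (n:ℝ) with htdef
  have ht0 : 0 ≤ t := by simp only [htdef]; linarith
  have ht1 : t ≤ 1 := by simp only [htdef]; linarith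
  have hαeq : (n:ℝ) + t = α := by ring
  have hGU := gamma_interp_upper hn2 ht0 ht1
  have hGL := gamma_interp_lower hn2 ht0 ht1
  rw [hαeq] at hGU; rw [hαeq] at hGL
  obtain ⟨FL, FU⟩ := log_factorial_bounds hn2
  have hdub : Real.log α - Real.log n ≤ t / n := by
    rw [← Real.log_div hα0.ne' hn0.ne']
    have h1 := Real.log_le_sub_one_of_pos (show (0:ℝ) < α/n by positivity)
    have h2 : α/(n:ℝ) - 1 = t/n := by field_simp; linarith [htdef]
    linarith
  have hdlb : t / α ≤ Real.log α - Real.log n := by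
    have h1 := Real.log_le_sub_one_of_pos (show (0:ℝ) < (n:ℝ)/α by positivity)
    rw [Real.log_div hn0.ne' hα0.ne'] at h1
    have h2 : (n:ℝ)/α - 1 = -(t/α) := by field_simp; ring
    linarith
  set d := Real.log α - Real.log n with hd
  clear_value n t d
  have e1 : ((n:ℝ)+1/2) * d ≤ ((n:ℝ)+1/2) * (t/n) :=
    mul_le_mul_of_nonneg_left hdub (by linarith)
  have e2 : ((n:ℝ)+1/2) * (t/n) = t + t/(2*n) := by field_simp
  have e3 : t/(2*(n:ℝ)) ≤ 4/α := by
    rw [div_le_div_iff₀ (by positivity) hα0]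
    nlinarith
  have h4 : (4:ℝ)/α = 4*(1/α) := by ring
  have h2' : (2:ℝ)/α = 2*(1/α) := by ring
  have key1 : (α - 1/2) * Real.log α + (1-t)*Real.log α - ((n:ℝ)+1/2)*Real.log n
      = ((n:ℝ)+1/2) * d := by
    have h' : α - 1/2 + (1 - t) = (n:ℝ) + 1/2 := by linarith
    rw [hd]
    linear_combination Real.log α * h'
  have dir1 : (α - 1/2) * Real.log α - α + (1/2)*Real.log (2*π) - Real.log (Real.Gamma α)
      ≤ 4/α := by linarith [hGL, FL, key1, e1, e2, e3, htdef]
  have f1 : (α - 1/2) * (t/α) ≤ (α - 1/2) * d := mul_le_mul_of_nonneg_left hdlb (by linarith)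
  have f2 : (α - 1/2) * (t/α) = t - t/(2*α) := by field_simp
  have g1 : t/(2*α) ≤ 1/α := by
    rw [div_le_div_iff₀ (by positivity) hα0]; nlinarith
  have g2 : 1/(2*(n:ℝ)) ≤ 2/α := by
    rw [div_le_div_iff₀ (by positivity) hα0]; linarith
  have g3 : (0:ℝ) ≤ 1/α := by positivity
  have key2 : ((n:ℝ)+1/2)*Real.log n + (t-1)*Real.log n - (α - 1/2)*Real.log α
      = -((α-1/2)*d) := by
    have h' : (n:ℝ) + 1/2 + (t - 1) = α - 1/2 := by linarith
    rw [hd]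
    linear_combination Real.log n * h'
  have k1 : Real.log (Real.Gamma α) ≤ ((n:ℝ)+1/2)*Real.log n + (t-1)*Real.log n
      - n + (1/2)*Real.log (2*π) + 1/(2*n) := by linarith [hGU, FU]
  have k2 : Real.log (Real.Gamma α) ≤ (α-1/2)*Real.log α - ((α-1/2)*d)
      - n + (1/2)*Real.log (2*π) + 1/(2*n) := by linarith [k1, key2]
  have k3 : Real.log (Real.Gamma α) ≤ (α-1/2)*Real.log α - t + t/(2*α)
      - n + (1/2)*Real.log (2*π) + 1/(2*n) := by linarith [k2, f1, f2]
  have dir2 : Real.log (Real.Gamma α)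
      - ((α - 1/2) * Real.log α - α + (1/2)*Real.log (2*π)) ≤ 4/α := by linarith [k3, g1, g2, g3, htdef]
  rw [abs_le]
  constructor
  · linarith [dir2]
  · linarith [dir1]

end GammaLocalCLTHelpers

set_option maxHeartbeats 1000000

/-- Gaussian local approximation of the Gamma density near its mean:
with μ = √α σ, λ = μ/α, uniformly for |j| ≤ ησ,
w_{α,λ}(μ+j) = (1/(μ+j)) √(α/(2π)) exp(-(α/2)(j/μ)²)(1+O(1/√α)) as α → ∞. -/
theorem gamma_density_local_clt (σ η : ℝ) (hσ : 0 < σ) (hη : 0 < η) :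
    ∃ K α₀ : ℝ, 0 < K ∧ 0 < α₀ ∧
      ∀ α : ℝ, α₀ ≤ α → ∀ j : ℝ, |j| ≤ η * σ →
        let μ := Real.sqrt α * σ
        let lam := μ / α
        |((μ + j) ^ (α - 1) * Real.exp (-(μ + j) / lam) / (lam ^ α * Real.Gamma α)) /
            ((1 / (μ + j)) * Real.sqrt (α / (2 * π)) * Real.exp (-(α / 2) * (j / μ) ^ 2))
          - 1| ≤ K / Real.sqrt α := by
  set C : ℝ := 4 + 2*η^3 with hCdef
  have hC : 0 < C := by positivity
  refine ⟨2*C, 4 + 4*η^2 + C^2, by positivity, by positivity, ?_⟩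
  intro α hα j hj
  intro μ lam
  have hα4 : (4:ℝ) ≤ α := by nlinarith
  have hα0 : (0:ℝ) < α := by linarith
  have hα1 : (1:ℝ) ≤ α := by linarith
  have hsq : 0 < Real.sqrt α := Real.sqrt_pos.2 hα0
  have hsqsq : Real.sqrt α * Real.sqrt α = α := Real.mul_self_sqrt hα0.le
  have hμeq : μ = Real.sqrt α * σ := rfl
  have hμ : 0 < μ := by rw [hμeq]; positivity
  have hlameq : lam = μ / α := rfl
  have hlam : 0 < lam := by rw [hlameq]; positivity
  set x := j / μ with hxdef
  -- |x| ≤ η/√α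
  have hxb : |x| ≤ η / Real.sqrt α := by
    have h1 : |x| = |j| / μ := by rw [hxdef, abs_div, abs_of_pos hμ]
    have h2 : |j| / μ ≤ (η * σ) / μ := by gcongr
    have h3 : (η * σ) / μ = η / Real.sqrt α := by
      rw [hμeq, mul_comm (Real.sqrt α) σ, mul_comm η σ, mul_div_mul_left _ _ hσ.ne']
    rw [h1, ← h3]
    exact h2
  -- |x| ≤ 1/2
  have hsqη : 2 * η ≤ Real.sqrt α := by
    have : Real.sqrt (4*η^2) ≤ Real.sqrt α := Real.sqrt_le_sqrt (by nlinarith)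
    have h4 : Real.sqrt (4*η^2) = 2*η := by
      rw [show 4*η^2 = (2*η)^2 by ring, Real.sqrt_sq (by positivity)]
    linarith
  have hx2 : |x| ≤ 1/2 := by
    refine hxb.trans ?_
    rw [div_le_iff₀ hsq]
    linarith
  have hx1 : 0 < 1 + x := by
    have := abs_le.1 hx2
    linarith [this.1]
  have hμj : μ + j = μ * (1 + x) := by
    rw [hxdef]; field_simp
  have hμjpos : 0 < μ + j := by rw [hμj]; positivity
  have hμlam : μ = lam * α := by rw [hlameq]; field_simp
  -- the two key scalar bounds
  set D : ℝ := (α - 1/2) * Real.log α - α + (1/2) * Real.log (2*π) - Real.log (Real.Gamma α)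
    with hDdef
  have hD : |D| ≤ 4/α := logGamma_approx hα4
  set T : ℝ := Real.log (1 + x) - x + x^2/2 with hTdef
  have hT : |T| ≤ 2 * |x|^3 := by
    have hlt : |(-x)| < 1 := by rw [abs_neg]; linarith [hx2]
    have h := Real.abs_log_sub_add_sum_range_le hlt 2
    rw [Finset.sum_range_succ, Finset.sum_range_succ, Finset.sum_range_zero] at h
    norm_num at h
    have he : -x + x^2/2 + Real.log (1+x) = T := by
      rw [hTdef]; ring
    have h2 : |x|^3 / (1 - |x|) ≤ 2 * |x|^3 := by
      rw [div_le_iff₀ (by linarith [hx2] : (0:ℝ) < 1 - |x|)]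
      have h0 : (0:ℝ) ≤ |x|^3 := by positivity
      nlinarith [hx2]
    calc |T| = |-x + x^2/2 + Real.log (1+x)| := by rw [he]
      _ ≤ |x|^3 / (1 - |x|) := h
      _ ≤ 2 * |x|^3 := h2
  set u : ℝ := D + α * T with hudef
  have hαxT : α * |T| ≤ 2 * η^3 / Real.sqrt α := by
    have h1 : |x|^3 ≤ (η / Real.sqrt α)^3 := pow_le_pow_left₀ (abs_nonneg x) hxb 3
    have h2 : α * (2 * (η / Real.sqrt α)^3) = 2 * η^3 / Real.sqrt α := by
      rw [div_pow]
      rw [show (Real.sqrt α)^3 = α * Real.sqrt α by rw [pow_succ, sq, hsqsq]]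
      field_simp
    calc α * |T| ≤ α * (2 * (η / Real.sqrt α)^3) :=
          mul_le_mul_of_nonneg_left (hT.trans (by linarith [h1])) hα0.le
      _ = 2 * η^3 / Real.sqrt α := h2
  have hu1 : |u| ≤ C / Real.sqrt α := by
    have h1 : |u| ≤ |D| + α * |T| := by
      rw [hudef]
      calc |D + α * T| ≤ |D| + |α * T| := abs_add_le _ _
        _ = |D| + α * |T| := by rw [abs_mul, abs_of_pos hα0]
    have hsqle : Real.sqrt α ≤ α := by
      calc Real.sqrt α ≤ Real.sqrt (α^2) := Real.sqrt_le_sqrt (by nlinarith)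
        _ = α := Real.sqrt_sq hα0.le
    have h2 : (4:ℝ)/α ≤ 4 / Real.sqrt α :=
      div_le_div_of_nonneg_left (by norm_num) hsq hsqle
    have h3 : C / Real.sqrt α = 4 / Real.sqrt α + 2 * η^3 / Real.sqrt α := by
      rw [hCdef]; ring
    rw [h3]
    linarith [hD, hαxT]
  have hu2 : |u| ≤ 1 := by
    have hCsq : C ≤ Real.sqrt α := by
      have : Real.sqrt (C^2) ≤ Real.sqrt α := Real.sqrt_le_sqrt (by nlinarith)
      rwa [Real.sqrt_sq hC.le] at this
    have : C / Real.sqrt α ≤ 1 := by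
      rw [div_le_one hsq]; exact hCsq
    linarith [hu1]
  -- the ratio equals exp u
  set w : ℝ := (μ + j) ^ (α - 1) * Real.exp (-(μ + j) / lam) / (lam ^ α * Real.Gamma α)
    with hwdef
  set g : ℝ := (1 / (μ + j)) * Real.sqrt (α / (2 * π)) * Real.exp (-(α / 2) * x ^ 2)
    with hgdef
  have hGpos : 0 < Real.Gamma α := Real.Gamma_pos_of_pos hα0
  have hwpos : 0 < w := by
    rw [hwdef]
    exact div_pos (mul_pos (Real.rpow_pos_of_pos hμjpos _) (Real.exp_pos _))
      (mul_pos (Real.rpow_pos_of_pos hlam _) hGpos)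
  have h2π : (0:ℝ) < 2 * π := by positivity
  have hgpos : 0 < g := by
    rw [hgdef]
    refine mul_pos (mul_pos (by positivity) (Real.sqrt_pos.2 (by positivity))) (Real.exp_pos _)
  -- logs
  have hlogμj : Real.log (μ + j) = Real.log lam + Real.log α + Real.log (1 + x) := by
    rw [hμj, hμlam, Real.log_mul (by positivity) hx1.ne',
      Real.log_mul hlam.ne' hα0.ne']
  have hdivlam : (μ + j) / lam = α * (1 + x) := by
    rw [hμj, hμlam]; field_simp
  have hlogw : Real.log w = (α - 1) * Real.log (μ + j) + (-(μ + j) / lam)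
      - (α * Real.log lam + Real.log (Real.Gamma α)) := by
    rw [hwdef, Real.log_div (by positivity) (by positivity),
      Real.log_mul (by positivity) (Real.exp_pos _).ne',
      Real.log_mul (by positivity) hGpos.ne',
      Real.log_rpow hμjpos, Real.log_rpow hlam, Real.log_exp]
  have hlogg : Real.log g = -Real.log (μ + j) + (1/2) * (Real.log α - Real.log (2*π))
      + (-(α / 2) * x ^ 2) := by
    rw [hgdef, Real.log_mul (by positivity) (Real.exp_pos _).ne',
      Real.log_mul (by positivity) (by positivity),
      Real.log_exp, one_div, Real.log_inv,
      Real.log_sqrt (by positivity), Real.log_div hα0.ne' h2π.ne']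
    ring
  have hdivlam' : -(μ + j) / lam = -(α * (1 + x)) := by rw [neg_div, hdivlam]
  have hkey : Real.log (w / g) = u := by
    rw [Real.log_div hwpos.ne' hgpos.ne', hlogw, hlogg, hlogμj, hdivlam', hudef, hDdef, hTdef]
    ring
  have hwg : w / g = Real.exp u := by
    rw [← hkey, Real.exp_log (div_pos hwpos hgpos)]
  -- final bound
  show |w / g - 1| ≤ 2*C / Real.sqrt α
  rw [hwg]
  calc |Real.exp u - 1| ≤ 2 * |u| := Real.abs_exp_sub_one_le hu2
    _ ≤ 2 * (C / Real.sqrt α) := by linarith [hu1]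
    _ = 2*C / Real.sqrt α := by ring
end
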